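/- Assume R satisfies skew-symmetry (i), the AYBE (ii), trigonometric unitarity (iii-trig), regularity (iv) with residue the identity, and quasi-periodicity (v). Define the additional Hamiltonian 𝓘^∨ := Σ_{1≤i<j≤n} (λ_i−λ_j)·R̄_{ij} ∘ s^∨_{ij}, where (λ_i−λ_j) denotes multiplication by that scalar function of λ. Then 𝓘^∨ commutes with the deformed spin chain Hamiltonian: 𝓗₂^∨ ∘ 𝓘^∨ = 𝓘^∨ ∘ 𝓗₂^∨ as operators on holomorphic U-valued functions of λ ∈ Λ. (This exhibits the integrable deformation of the Sechin–Zotov spin chain.) -/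

import Mathlib

open Finset Kronecker

noncomputable section

/-- `D = ℂ ∖ 2πℤ`. -/
def Dtrig : Set ℂ := {z | ∀ m : ℤ, z ≠ 2 * (Real.pi : ℂ) * (m : ℂ)}

/-- Matrices modelling `End(ℂ^d ⊗ ℂ^d)`. -/
abbrev M2 (d : ℕ) := Matrix (Fin d × Fin d) (Fin d × Fin d) ℂ

/-- The flip `P(u ⊗ v) = v ⊗ u` on `ℂ^d ⊗ ℂ^d`. -/
def flipM (d : ℕ) : M2 d := fun p q => if p.1 = q.2 ∧ p.2 = q.1 then 1 else 0

/-- Tensor-leg placement `T_{ij}`. -/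
def leg {n d : ℕ} (T : M2 d) (i j : Fin n) :
    Matrix (Fin n → Fin d) (Fin n → Fin d) ℂ :=
  fun a b => T (a i, a j) (b i, b j) *
    ∏ k ∈ univ.filter (fun k => k ≠ i ∧ k ≠ j), (if a k = b k then (1 : ℂ) else 0)

/-- Property (i): skew-symmetry. -/
def SkewSym {d : ℕ} (D : Set ℂ) (R : ℂ → ℂ → M2 d) : Prop :=
  ∀ z ∈ D, ∀ μ ∈ D, R (-z) (-μ) = - (flipM d * R z μ * flipM d)

/-- Property (ii): the associative Yang–Baxter equation. -/
def AYBE {d : ℕ} (D : Set ℂ) (R : ℂ → ℂ → M2 d) : Prop :=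
  ∀ z z' μ μ' : ℂ, z ∈ D → z' ∈ D → z + z' ∈ D → μ ∈ D → μ' ∈ D →
    μ - μ' ∈ D → μ' - μ ∈ D →
    leg (n := 3) (R z μ) 0 1 * leg (n := 3) (R z' μ') 1 2 =
      leg (n := 3) (R (z + z') μ') 0 2 * leg (n := 3) (R z (μ - μ')) 0 1 +
      leg (n := 3) (R z' (μ' - μ)) 1 2 * leg (n := 3) (R (z + z') μ) 0 2

/-- Property (iii-trig): trigonometric unitarity. -/
def UnitarityTrig {d : ℕ} (D : Set ℂ) (R : ℂ → ℂ → M2 d) : Prop :=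
  ∀ z ∈ D, ∀ μ ∈ D, R z μ * (flipM d * R (-z) μ * flipM d) =
    (1 / (4 * Complex.sin (μ / 2) ^ 2) - 1 / (4 * Complex.sin (z / 2) ^ 2)) • 1

/-- Property (iv): regularity with residue the identity (entrywise, locally uniform). -/
def RegularityId {d : ℕ} (D : Set ℂ) (R : ℂ → ℂ → M2 d) (r : ℂ → M2 d) : Prop :=
  ∀ a b, TendstoLocallyUniformlyOn (fun μ z => R z μ a b - (1 : M2 d) a b / μ)
    (fun z => r z a b) (nhdsWithin (0 : ℂ) {(0 : ℂ)}ᶜ) D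

/-- Property (v): quasi-periodicity with respect to an invertible `Q ∈ End(ℂ^d)`. -/
def QuasiPeriodic {d : ℕ} (D : Set ℂ) (R : ℂ → ℂ → M2 d)
    (Q Qinv : Matrix (Fin d) (Fin d) ℂ) : Prop :=
  Q * Qinv = 1 ∧ Qinv * Q = 1 ∧
  ∀ z ∈ D, ∀ μ ∈ D,
    R z (μ + 2 * (Real.pi : ℂ)) = (Qinv ⊗ₖ (1 : Matrix (Fin d) (Fin d) ℂ)) * R z μ *
      ((1 : Matrix (Fin d) (Fin d) ℂ) ⊗ₖ Q) ∧
    (Q ⊗ₖ Q) * R z μ = R z μ * (Q ⊗ₖ Q)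

/-- The derivative `∂_z R` of `R` in its first argument (entrywise). -/
def dzR {d : ℕ} (R : ℂ → ℂ → M2 d) : ℂ → ℂ → M2 d :=
  fun z μ a b => deriv (fun t => R t μ a b) z

/-- The equilibrium differences `2π(i−j)/n`. -/
def znum (n : ℕ) (i j : Fin n) : ℂ :=
  2 * (Real.pi : ℂ) * (((i : ℕ) : ℂ) - ((j : ℕ) : ℂ)) / (n : ℂ)

/-- The spin space `U = (ℂ^d)^{⊗ n}`. -/
abbrev Uspin (n d : ℕ) := (Fin n → Fin d) → ℂ

/-- The operator `σ^∨`: `(σ^∨ F)(λ) = F(σ⁻¹·λ)`, acting only on the argument `λ`. -/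
def svee {n d : ℕ} (σ : Equiv.Perm (Fin n)) (F : (Fin n → ℂ) → Uspin n d) :
    (Fin n → ℂ) → Uspin n d :=
  fun lam => F (lam ∘ σ)

/-- The 3-cycle `i ↦ j ↦ k ↦ i`. -/
def cyc3 {n : ℕ} (i j k : Fin n) : Equiv.Perm (Fin n) :=
  Equiv.swap i j * Equiv.swap j k

/-- The deformed principal spin chain Hamiltonian `𝓗₂^∨ = Σ_{i<j} ∂R̄_{ij} ∘ s^∨_{ij}`. -/
def H2vee {n d : ℕ} (R : ℂ → ℂ → M2 d) (F : (Fin n → ℂ) → Uspin n d) :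
    (Fin n → ℂ) → Uspin n d :=
  fun lam => ∑ q ∈ univ.filter (fun q : Fin n × Fin n => q.1 < q.2),
    (leg (dzR R (znum n q.1 q.2) (lam q.1 - lam q.2)) q.1 q.2).mulVec
      (svee (Equiv.swap q.1 q.2) F lam)

/-- The additional Hamiltonian `𝓘^∨ = Σ_{i<j} (λ_i−λ_j)·R̄_{ij} ∘ s^∨_{ij}`. -/
def Ivee {n d : ℕ} (R : ℂ → ℂ → M2 d) (F : (Fin n → ℂ) → Uspin n d) :
    (Fin n → ℂ) → Uspin n d :=
  fun lam => ∑ q ∈ univ.filter (fun q : Fin n × Fin n => q.1 < q.2),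
    (lam q.1 - lam q.2) •
      (leg (R (znum n q.1 q.2) (lam q.1 - lam q.2)) q.1 q.2).mulVec
        (svee (Equiv.swap q.1 q.2) F lam)

section SZaux

open Complex

/-! ### Dtrig basics -/

lemma mem_Dtrig_iff {z : ℂ} : z ∈ Dtrig ↔ Complex.sin (z / 2) ≠ 0 := by
  constructor
  · intro hz h
    rcases Complex.sin_eq_zero_iff.1 h with ⟨k, hk⟩
    exact hz k (by linear_combination 2 * hk)
  · intro h m hzm
    apply h
    apply Complex.sin_eq_zero_iff.2 ⟨m, by rw [hzm]; ring⟩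

lemma isOpen_Dtrig : IsOpen Dtrig := by
  have : Dtrig = (fun z : ℂ => Complex.sin (z / 2)) ⁻¹' ({0}ᶜ) := by
    ext z; simp [mem_Dtrig_iff]
  rw [this]
  exact (isOpen_compl_singleton).preimage (by fun_prop)

lemma neg_mem_Dtrig {z : ℂ} (hz : z ∈ Dtrig) : -z ∈ Dtrig := by
  rw [mem_Dtrig_iff] at hz ⊢
  simpa [neg_div] using hz

/-! ### znum basics -/

lemma znum_neg (n : ℕ) (i j : Fin n) : znum n j i = -znum n i j := by
  rw [znum, znum]; ring

lemma znum_add (n : ℕ) (hn : (n : ℂ) ≠ 0) (i j k : Fin n) :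
    znum n i j + znum n j k = znum n i k := by
  rw [znum, znum, znum]; field_simp; ring

lemma znum_mem_Dtrig {n : ℕ} {i j : Fin n} (hij : i ≠ j) : znum n i j ∈ Dtrig := by
  intro m hm
  have hn : (0:ℕ) < n := i.pos
  have hpi : (Real.pi : ℂ) ≠ 0 := by
    simpa using Complex.ofReal_ne_zero.2 Real.pi_ne_zero
  have h2π : (2 * (Real.pi:ℂ)) ≠ 0 := by simpa using hpi
  rw [znum] at hm
  have hnc : (n : ℂ) ≠ 0 := Nat.cast_ne_zero.2 hn.ne'
  have hm' : 2 * (Real.pi:ℂ) * (((i:ℕ):ℂ) - ((j:ℕ):ℂ)) =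
      2 * (Real.pi:ℂ) * ((m : ℂ) * (n:ℂ)) := by
    field_simp at hm
    linear_combination (2 * (Real.pi:ℂ)) * hm
  have h2 : (((i:ℕ):ℂ) - ((j:ℕ):ℂ)) = (m : ℂ) * (n : ℂ) := mul_left_cancel₀ h2π hm'
  have h3 : ((i:ℕ) : ℤ) - ((j:ℕ) : ℤ) = m * n := by exact_mod_cast h2
  have hi := i.isLt
  have hj := j.isLt
  have hne : (i:ℕ) ≠ (j:ℕ) := fun h => hij (Fin.ext h)
  have hm0 : m ≠ 0 := by rintro rfl; simp at h3; omega
  have habs : (n:ℤ) ≤ |m * n| := by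
    rw [abs_mul, abs_of_nonneg (by positivity : (0:ℤ) ≤ (n:ℤ))]
    calc (n:ℤ) = 1 * n := (one_mul _).symm
    _ ≤ |m| * n := by
        apply mul_le_mul_of_nonneg_right (Int.one_le_abs hm0) (by positivity)
  have hlt : |((i:ℕ) : ℤ) - ((j:ℕ) : ℤ)| < n := abs_sub_lt_iff.2 ⟨by omega, by omega⟩
  rw [h3] at hlt
  linarith

end SZaux

section SZaux2

variable {n d : ℕ}

/-- Product of deltas outside a triple of positions. -/
def offd (i j k : Fin n) (a b : Fin n → Fin d) : ℂ :=
  ∏ m ∈ univ.filter (fun m => m ≠ i ∧ m ≠ j ∧ m ≠ k), if a m = b m then (1:ℂ) else 0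

/-- Product of deltas outside four positions. -/
def offp (i j k l : Fin n) (a b : Fin n → Fin d) : ℂ :=
  ∏ m ∈ univ.filter (fun m => m ≠ i ∧ m ≠ j ∧ m ≠ k ∧ m ≠ l),
    if a m = b m then (1:ℂ) else 0

lemma sum_ite_eq_param {ι₀ : Type*} [Fintype ι₀] (P : (Fin n → Fin d) → Prop)
    [DecidablePred P] (ψ : ι₀ → (Fin n → Fin d)) (hinj : Function.Injective ψ)
    (hP : ∀ c, P c ↔ ∃ v, c = ψ v) (f : (Fin n → Fin d) → ℂ) :
    (∑ c, if P c then f c else 0) = ∑ v, f (ψ v) := by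
  rw [← Finset.sum_filter]
  have himg : univ.filter (fun c => P c) = Finset.image ψ univ := by
    ext c
    simp only [Finset.mem_filter, Finset.mem_univ, true_and, Finset.mem_image]
    rw [hP c]
    exact exists_congr fun v => eq_comm
  rw [himg, Finset.sum_image (fun x _ y _ h => hinj h)]

lemma leg_mul_apply (T S : M2 d) (i j k l : Fin n) (a b : Fin n → Fin d) :
    (leg T i j * leg S k l) a b =
      ∑ c : Fin n → Fin d,
        if (∀ m, m ≠ i → m ≠ j → a m = c m) ∧ (∀ m, m ≠ k → m ≠ l → c m = b m) then
          T (a i, a j) (c i, c j) * S (c k, c l) (b k, b l)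
        else 0 := by
  rw [Matrix.mul_apply]
  refine Finset.sum_congr rfl fun c _ => ?_
  show (T (a i, a j) (c i, c j) * ∏ m ∈ univ.filter (fun m => m ≠ i ∧ m ≠ j),
      (if a m = c m then (1:ℂ) else 0)) *
    (S (c k, c l) (b k, b l) * ∏ m ∈ univ.filter (fun m => m ≠ k ∧ m ≠ l),
      (if c m = b m then (1:ℂ) else 0)) = _
  rw [Finset.prod_boole, Finset.prod_boole]
  simp only [Finset.mem_filter, Finset.mem_univ, true_and, and_imp]
  by_cases h1 : ∀ m, m ≠ i → m ≠ j → a m = c m <;>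
    by_cases h2 : ∀ m, m ≠ k → m ≠ l → c m = b m <;>
    simp [h1, h2] <;> split_ifs <;> simp_all

end SZaux2

section SZaux3

variable {n d : ℕ}

lemma P1 {i j k : Fin n} (hij : i ≠ j) (hjk : j ≠ k) (hik : i ≠ k)
    (T S : M2 d) (a b : Fin n → Fin d) :
    (leg T i j * leg S j k) a b =
      (∑ v, T (a i, a j) (b i, v) * S (v, a k) (b j, b k)) * offd i j k a b := by
  rw [leg_mul_apply]
  have hev : ∀ (v : Fin d) m, Function.update (Function.update a i (b i)) j v m
      = if m = j then v else if m = i then b i else a m := fun v m => by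
    rw [Function.update_apply, Function.update_apply]
  by_cases H : ∀ m, m ≠ i → m ≠ j → m ≠ k → a m = b m
  · have hoff : offd i j k a b = 1 := by
      rw [offd]; apply Finset.prod_eq_one; intro m hm
      simp only [Finset.mem_filter, Finset.mem_univ, true_and] at hm
      rw [if_pos (H m hm.1 hm.2.1 hm.2.2)]
    rw [hoff, mul_one]
    rw [sum_ite_eq_param _ (fun v => Function.update (Function.update a i (b i)) j v)
      (fun x y hxy => by simpa using congrFun hxy j) ?_ _]
    · refine Finset.sum_congr rfl fun v _ => ?_
      simp [hev, hij, hjk, hik, hij.symm, hjk.symm, hik.symm]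
    · intro c
      constructor
      · rintro ⟨h1, h2⟩
        refine ⟨c j, funext fun m => ?_⟩
        beta_reduce
        rw [hev]
        split_ifs with e1 e2
        · rw [e1]
        · rw [e2]; exact h2 i hij hik
        · exact (h1 m e2 e1).symm
      · rintro ⟨v, rfl⟩
        constructor
        · intro m hmi hmj
          beta_reduce; rw [hev, if_neg hmj, if_neg hmi]
        · intro m hmj hmk
          beta_reduce; rw [hev, if_neg hmj]
          split_ifs with e2
          · rw [e2]
          · exact H m e2 hmj hmk
  · push_neg at H
    obtain ⟨m₀, hm₀i, hm₀j, hm₀k, hm₀⟩ := H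
    have hoff : offd i j k a b = 0 := by
      rw [offd]
      exact Finset.prod_eq_zero (i := m₀) (by simp [hm₀i, hm₀j, hm₀k]) (if_neg hm₀)
    rw [hoff, mul_zero]
    refine Finset.sum_eq_zero fun c _ => if_neg ?_
    rintro ⟨h1, h2⟩
    exact hm₀ ((h1 m₀ hm₀i hm₀j).trans (h2 m₀ hm₀j hm₀k))

lemma P2 {i j k : Fin n} (hij : i ≠ j) (hjk : j ≠ k) (hik : i ≠ k)
    (T S : M2 d) (a b : Fin n → Fin d) :
    (leg T i k * leg S i j) a b =
      (∑ v, T (a i, a k) (v, b k) * S (v, a j) (b i, b j)) * offd i j k a b := by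
  rw [leg_mul_apply]
  have hev : ∀ (v : Fin d) m, Function.update (Function.update a k (b k)) i v m
      = if m = i then v else if m = k then b k else a m := fun v m => by
    rw [Function.update_apply, Function.update_apply]
  by_cases H : ∀ m, m ≠ i → m ≠ j → m ≠ k → a m = b m
  · have hoff : offd i j k a b = 1 := by
      rw [offd]; apply Finset.prod_eq_one; intro m hm
      simp only [Finset.mem_filter, Finset.mem_univ, true_and] at hm
      rw [if_pos (H m hm.1 hm.2.1 hm.2.2)]
    rw [hoff, mul_one]
    rw [sum_ite_eq_param _ (fun v => Function.update (Function.update a k (b k)) i v)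
      (fun x y hxy => by simpa using congrFun hxy i) ?_ _]
    · refine Finset.sum_congr rfl fun v _ => ?_
      simp [hev, hij, hjk, hik, hij.symm, hjk.symm, hik.symm]
    · intro c
      constructor
      · rintro ⟨h1, h2⟩
        refine ⟨c i, funext fun m => ?_⟩
        beta_reduce
        rw [hev]
        split_ifs with e1 e2
        · rw [e1]
        · rw [e2]; exact h2 k hik.symm hjk.symm
        · exact (h1 m e1 e2).symm
      · rintro ⟨v, rfl⟩
        constructor
        · intro m hmi hmk
          beta_reduce; rw [hev, if_neg hmi, if_neg hmk]
        · intro m hmi hmj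
          beta_reduce; rw [hev, if_neg hmi]
          split_ifs with e2
          · rw [e2]
          · exact H m hmi hmj e2
  · push_neg at H
    obtain ⟨m₀, hm₀i, hm₀j, hm₀k, hm₀⟩ := H
    have hoff : offd i j k a b = 0 := by
      rw [offd]
      exact Finset.prod_eq_zero (i := m₀) (by simp [hm₀i, hm₀j, hm₀k]) (if_neg hm₀)
    rw [hoff, mul_zero]
    refine Finset.sum_eq_zero fun c _ => if_neg ?_
    rintro ⟨h1, h2⟩
    exact hm₀ ((h1 m₀ hm₀i hm₀k).trans (h2 m₀ hm₀i hm₀j))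

lemma P3 {i j k : Fin n} (hij : i ≠ j) (hjk : j ≠ k) (hik : i ≠ k)
    (T S : M2 d) (a b : Fin n → Fin d) :
    (leg T j k * leg S i k) a b =
      (∑ v, T (a j, a k) (b j, v) * S (a i, v) (b i, b k)) * offd i j k a b := by
  rw [leg_mul_apply]
  have hev : ∀ (v : Fin d) m, Function.update (Function.update a j (b j)) k v m
      = if m = k then v else if m = j then b j else a m := fun v m => by
    rw [Function.update_apply, Function.update_apply]
  by_cases H : ∀ m, m ≠ i → m ≠ j → m ≠ k → a m = b m
  · have hoff : offd i j k a b = 1 := by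
      rw [offd]; apply Finset.prod_eq_one; intro m hm
      simp only [Finset.mem_filter, Finset.mem_univ, true_and] at hm
      rw [if_pos (H m hm.1 hm.2.1 hm.2.2)]
    rw [hoff, mul_one]
    rw [sum_ite_eq_param _ (fun v => Function.update (Function.update a j (b j)) k v)
      (fun x y hxy => by simpa using congrFun hxy k) ?_ _]
    · refine Finset.sum_congr rfl fun v _ => ?_
      simp [hev, hij, hjk, hik, hij.symm, hjk.symm, hik.symm]
    · intro c
      constructor
      · rintro ⟨h1, h2⟩
        refine ⟨c k, funext fun m => ?_⟩
        beta_reduce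
        rw [hev]
        split_ifs with e1 e2
        · rw [e1]
        · rw [e2]; exact h2 j hij.symm hjk
        · exact (h1 m e2 e1).symm
      · rintro ⟨v, rfl⟩
        constructor
        · intro m hmj hmk
          beta_reduce; rw [hev, if_neg hmk, if_neg hmj]
        · intro m hmi hmk
          beta_reduce; rw [hev, if_neg hmk]
          split_ifs with e2
          · rw [e2]
          · exact H m hmi e2 hmk
  · push_neg at H
    obtain ⟨m₀, hm₀i, hm₀j, hm₀k, hm₀⟩ := H
    have hoff : offd i j k a b = 0 := by
      rw [offd]
      exact Finset.prod_eq_zero (i := m₀) (by simp [hm₀i, hm₀j, hm₀k]) (if_neg hm₀)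
    rw [hoff, mul_zero]
    refine Finset.sum_eq_zero fun c _ => if_neg ?_
    rintro ⟨h1, h2⟩
    exact hm₀ ((h1 m₀ hm₀j hm₀k).trans (h2 m₀ hm₀i hm₀k))

lemma P4 {i j k : Fin n} (hij : i ≠ j) (hjk : j ≠ k) (hik : i ≠ k)
    (T S : M2 d) (a b : Fin n → Fin d) :
    (leg T j k * leg S i j) a b =
      (∑ v, T (a j, a k) (v, b k) * S (a i, v) (b i, b j)) * offd i j k a b := by
  rw [leg_mul_apply]
  have hev : ∀ (v : Fin d) m, Function.update (Function.update a k (b k)) j v m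
      = if m = j then v else if m = k then b k else a m := fun v m => by
    rw [Function.update_apply, Function.update_apply]
  by_cases H : ∀ m, m ≠ i → m ≠ j → m ≠ k → a m = b m
  · have hoff : offd i j k a b = 1 := by
      rw [offd]; apply Finset.prod_eq_one; intro m hm
      simp only [Finset.mem_filter, Finset.mem_univ, true_and] at hm
      rw [if_pos (H m hm.1 hm.2.1 hm.2.2)]
    rw [hoff, mul_one]
    rw [sum_ite_eq_param _ (fun v => Function.update (Function.update a k (b k)) j v)
      (fun x y hxy => by simpa using congrFun hxy j) ?_ _]
    · refine Finset.sum_congr rfl fun v _ => ?_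
      simp [hev, hij, hjk, hik, hij.symm, hjk.symm, hik.symm]
    · intro c
      constructor
      · rintro ⟨h1, h2⟩
        refine ⟨c j, funext fun m => ?_⟩
        beta_reduce
        rw [hev]
        split_ifs with e1 e2
        · rw [e1]
        · rw [e2]; exact h2 k hik.symm hjk.symm
        · exact (h1 m e1 e2).symm
      · rintro ⟨v, rfl⟩
        constructor
        · intro m hmj hmk
          beta_reduce; rw [hev, if_neg hmj, if_neg hmk]
        · intro m hmi hmj
          beta_reduce; rw [hev, if_neg hmj]
          split_ifs with e2
          · rw [e2]
          · exact H m hmi hmj e2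
  · push_neg at H
    obtain ⟨m₀, hm₀i, hm₀j, hm₀k, hm₀⟩ := H
    have hoff : offd i j k a b = 0 := by
      rw [offd]
      exact Finset.prod_eq_zero (i := m₀) (by simp [hm₀i, hm₀j, hm₀k]) (if_neg hm₀)
    rw [hoff, mul_zero]
    refine Finset.sum_eq_zero fun c _ => if_neg ?_
    rintro ⟨h1, h2⟩
    exact hm₀ ((h1 m₀ hm₀j hm₀k).trans (h2 m₀ hm₀i hm₀j))

end SZaux3

section SZaux4

variable {n d : ℕ}

lemma leg_mul_same {i j : Fin n} (hij : i ≠ j) (T S : M2 d) :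
    leg T i j * leg S i j = leg (T * S) i j := by
  ext a b
  rw [leg_mul_apply]
  have hev : ∀ (v : Fin d × Fin d) m, Function.update (Function.update a i v.1) j v.2 m
      = if m = j then v.2 else if m = i then v.1 else a m := fun v m => by
    rw [Function.update_apply, Function.update_apply]
  show _ = (T * S) (a i, a j) (b i, b j) *
    ∏ m ∈ univ.filter (fun m => m ≠ i ∧ m ≠ j), (if a m = b m then (1:ℂ) else 0)
  rw [Finset.prod_boole]
  simp only [Finset.mem_filter, Finset.mem_univ, true_and, and_imp]
  by_cases H : ∀ m, m ≠ i → m ≠ j → a m = b m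
  · rw [if_pos H, mul_one]
    rw [sum_ite_eq_param _ (fun v : Fin d × Fin d =>
        Function.update (Function.update a i v.1) j v.2)
      (fun x y hxy => by
        have h1 := congrFun hxy i
        have h2 := congrFun hxy j
        simp only [Function.update_of_ne hij, Function.update_self] at h1 h2
        exact Prod.ext h1 h2) ?_ _]
    · rw [Matrix.mul_apply]
      refine Finset.sum_congr rfl fun v _ => ?_
      simp [hev, hij, hij.symm]
    · intro c
      constructor
      · rintro ⟨h1, h2⟩
        refine ⟨(c i, c j), funext fun m => ?_⟩
        beta_reduce
        rw [hev]
        split_ifs with e1 e2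
        · rw [e1]
        · rw [e2]
        · exact (h1 m e2 e1).symm
      · rintro ⟨v, rfl⟩
        constructor
        · intro m hmi hmj
          beta_reduce; rw [hev, if_neg hmj, if_neg hmi]
        · intro m hmi hmj
          beta_reduce; rw [hev, if_neg hmj, if_neg hmi]
          exact H m hmi hmj
  · rw [if_neg H, mul_zero]
    refine Finset.sum_eq_zero fun c _ => if_neg ?_
    rintro ⟨h1, h2⟩
    apply H
    intro m hmi hmj
    exact (h1 m hmi hmj).trans (h2 m hmi hmj)

lemma P0 {i j k l : Fin n} (hij : i ≠ j) (hik : i ≠ k) (hil : i ≠ l)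
    (hjk : j ≠ k) (hjl : j ≠ l) (hkl : k ≠ l) (T S : M2 d) (a b : Fin n → Fin d) :
    (leg T i j * leg S k l) a b =
      T (a i, a j) (b i, b j) * S (a k, a l) (b k, b l) * offp i j k l a b := by
  rw [leg_mul_apply]
  have hev : ∀ m, Function.update (Function.update a i (b i)) j (b j) m
      = if m = j then b j else if m = i then b i else a m := fun m => by
    rw [Function.update_apply, Function.update_apply]
  by_cases H : ∀ m, m ≠ i → m ≠ j → m ≠ k → m ≠ l → a m = b m
  · have hoff : offp i j k l a b = 1 := by
      rw [offp]; apply Finset.prod_eq_one; intro m hm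
      simp only [Finset.mem_filter, Finset.mem_univ, true_and] at hm
      rw [if_pos (H m hm.1 hm.2.1 hm.2.2.1 hm.2.2.2)]
    rw [hoff, mul_one]
    rw [sum_ite_eq_param (ι₀ := Unit) _
      (fun _ => Function.update (Function.update a i (b i)) j (b j))
      (fun x y _ => rfl) ?_ _]
    · simp only [Finset.univ_unique, Finset.sum_singleton]
      simp [hev, hij, hjk, hik, hjl, hil, hkl, hij.symm, hjk.symm, hik.symm,
        hjl.symm, hil.symm, hkl.symm]
    · intro c
      constructor
      · rintro ⟨h1, h2⟩
        refine ⟨Unit.unit, funext fun m => ?_⟩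
        beta_reduce
        rw [hev]
        split_ifs with e1 e2
        · rw [e1]; exact h2 j hjk hjl
        · rw [e2]; exact h2 i hik hil
        · exact (h1 m e2 e1).symm
      · rintro ⟨v, rfl⟩
        constructor
        · intro m hmi hmj
          beta_reduce; rw [hev, if_neg hmj, if_neg hmi]
        · intro m hmk hml
          beta_reduce; rw [hev]
          split_ifs with e1 e2
          · rw [e1]
          · rw [e2]
          · exact H m e2 e1 hmk hml
  · push_neg at H
    obtain ⟨m₀, hm₀i, hm₀j, hm₀k, hm₀l, hm₀⟩ := H
    have hoff : offp i j k l a b = 0 := by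
      rw [offp]
      exact Finset.prod_eq_zero (i := m₀) (by simp [hm₀i, hm₀j, hm₀k, hm₀l]) (if_neg hm₀)
    rw [hoff, mul_zero]
    refine Finset.sum_eq_zero fun c _ => if_neg ?_
    rintro ⟨h1, h2⟩
    exact hm₀ ((h1 m₀ hm₀i hm₀j).trans (h2 m₀ hm₀k hm₀l))

lemma offp_comm {i j k l : Fin n} (a b : Fin n → Fin d) :
    offp k l i j a b = offp i j k l a b := by
  rw [offp, offp]
  apply Finset.prod_congr _ fun _ _ => rfl
  ext m
  simp only [Finset.mem_filter, Finset.mem_univ, true_and]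
  tauto

lemma leg_disjoint_comm {i j k l : Fin n} (hij : i ≠ j) (hik : i ≠ k) (hil : i ≠ l)
    (hjk : j ≠ k) (hjl : j ≠ l) (hkl : k ≠ l) (T S : M2 d) :
    leg T i j * leg S k l = leg S k l * leg T i j := by
  ext a b
  rw [P0 hij hik hil hjk hjl hkl, P0 hkl hik.symm hjk.symm hil.symm hjl.symm hij,
    offp_comm]
  ring

lemma leg_smul (c : ℂ) (T : M2 d) (i j : Fin n) :
    leg (c • T) i j = c • (leg T i j : Matrix (Fin n → Fin d) (Fin n → Fin d) ℂ) := by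
  ext a b
  show (c • T) _ _ * _ = c • (T _ _ * _)
  simp [Matrix.smul_apply, mul_assoc]

lemma leg_add (T S : M2 d) (i j : Fin n) :
    leg (T + S) i j = leg T i j + leg S i j := by
  ext a b
  show (T + S) _ _ * _ = T _ _ * _ + S _ _ * _
  rw [Matrix.add_apply, add_mul]

lemma leg_one {i j : Fin n} (hij : i ≠ j) :
    leg (1 : M2 d) i j = (1 : Matrix (Fin n → Fin d) (Fin n → Fin d) ℂ) := by
  ext a b
  show (1 : M2 d) (a i, a j) (b i, b j) * _ = _
  rw [Finset.prod_boole, Matrix.one_apply, Matrix.one_apply]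
  simp only [Finset.mem_filter, Finset.mem_univ, true_and, and_imp]
  have key : ((a i, a j) = (b i, b j) ∧ ∀ m, m ≠ i → m ≠ j → a m = b m) ↔ a = b := by
    constructor
    · rintro ⟨h1, h2⟩
      funext m
      rcases eq_or_ne m i with rfl | hmi
      · exact (Prod.ext_iff.1 h1).1
      rcases eq_or_ne m j with rfl | hmj
      · exact (Prod.ext_iff.1 h1).2
      · exact h2 m hmi hmj
    · rintro rfl; exact ⟨rfl, fun _ _ _ => rfl⟩
  by_cases h : a = b
  · have hk := key.2 h
    rw [if_pos hk.1, if_pos (fun m hmi hmj => hk.2 m hmi hmj), if_pos h, one_mul]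
  · rw [if_neg h]
    by_cases h1 : (a i, a j) = (b i, b j)
    · rw [if_pos h1, one_mul, if_neg]
      exact fun hall => h (key.1 ⟨h1, fun m hmi hmj => hall m hmi hmj⟩)
    · rw [if_neg h1, zero_mul]

/-! ### flip lemmas -/

lemma flip_mul_apply (T : M2 d) (p q : Fin d × Fin d) :
    (flipM d * T) p q = T (p.2, p.1) q := by
  rw [Matrix.mul_apply]
  rw [Finset.sum_eq_single (p.2, p.1)]
  · show (if p.1 = p.1 ∧ p.2 = p.2 then (1:ℂ) else 0) * _ = _
    rw [if_pos ⟨rfl, rfl⟩, one_mul]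
  · intro r _ hr
    show (if p.1 = r.2 ∧ p.2 = r.1 then (1:ℂ) else 0) * _ = 0
    rw [if_neg, zero_mul]
    rintro ⟨h1, h2⟩
    exact hr (by rw [Prod.ext_iff]; exact ⟨h2.symm, h1.symm⟩)
  · intro h; exact absurd (Finset.mem_univ _) h

lemma mul_flip_apply (T : M2 d) (p q : Fin d × Fin d) :
    (T * flipM d) p q = T p (q.2, q.1) := by
  rw [Matrix.mul_apply]
  rw [Finset.sum_eq_single (q.2, q.1)]
  · show _ * (if q.2 = q.2 ∧ q.1 = q.1 then (1:ℂ) else 0) = _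
    rw [if_pos ⟨rfl, rfl⟩, mul_one]
  · intro r _ hr
    show _ * (if r.1 = q.2 ∧ r.2 = q.1 then (1:ℂ) else 0) = 0
    rw [if_neg, mul_zero]
    rintro ⟨h1, h2⟩
    exact hr (by rw [Prod.ext_iff]; exact ⟨h1, h2⟩)
  · intro h; exact absurd (Finset.mem_univ _) h

lemma flip_conj_apply (T : M2 d) (p q : Fin d × Fin d) :
    (flipM d * T * flipM d) p q = T (p.2, p.1) (q.2, q.1) := by
  rw [mul_flip_apply, flip_mul_apply]

lemma leg_swap (T : M2 d) (i j : Fin n) :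
    leg T j i = leg (flipM d * T * flipM d) i j := by
  ext a b
  show T (a j, a i) (b j, b i) * _ = (flipM d * T * flipM d) (a i, a j) (b i, b j) * _
  rw [flip_conj_apply]
  congr 1
  apply Finset.prod_congr _ fun _ _ => rfl
  ext m
  simp only [Finset.mem_filter, Finset.mem_univ, true_and]
  tauto

end SZaux4

section SZaux5

variable {n d : ℕ}

/-! ### entrywise derivative machinery -/

lemma hasDerivAt_matrix_mul {ι : Type*} [Fintype ι] {A B : ℂ → Matrix ι ι ℂ}
    {A' B' : Matrix ι ι ℂ} {z : ℂ}
    (hA : ∀ a b, HasDerivAt (fun t => A t a b) (A' a b) z)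
    (hB : ∀ a b, HasDerivAt (fun t => B t a b) (B' a b) z) :
    ∀ a b, HasDerivAt (fun t => (A t * B t) a b) ((A' * B z + A z * B') a b) z := by
  intro a b
  have h := HasDerivAt.sum (u := Finset.univ)
    (A := fun c t => A t a c * B t c b)
    (A' := fun c => A' a c * B z c b + A z a c * B' c b)
    (fun c _ => (hA a c).mul (hB c b))
  have he : ∀ t, (A t * B t) a b = ∑ c, A t a c * B t c b := fun t => Matrix.mul_apply
  have hv : (∑ c, (A' a c * B z c b + A z a c * B' c b)) = (A' * B z + A z * B') a b := by
    rw [Matrix.add_apply, Matrix.mul_apply, Matrix.mul_apply, Finset.sum_add_distrib]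
  rw [← hv]
  exact h.congr_deriv rfl |>.congr_of_eventuallyEq (by filter_upwards with t; rw [he t, Finset.sum_apply])

lemma matrix_deriv_eq {ι : Type*} [Fintype ι] {L M : ℂ → Matrix ι ι ℂ}
    {V W : Matrix ι ι ℂ} {z : ℂ} (hev : L =ᶠ[nhds z] M)
    (hL : ∀ a b, HasDerivAt (fun t => L t a b) (V a b) z)
    (hM : ∀ a b, HasDerivAt (fun t => M t a b) (W a b) z) : V = W := by
  ext a b
  have hev' : (fun t => L t a b) =ᶠ[nhds z] fun t => M t a b :=
    hev.mono fun t ht => by show L t a b = M t a b; rw [ht]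
  exact (hev'.hasDerivAt_iff.1 (hL a b)).unique (hM a b)

/-! ### derivatives of R entries and legs -/

variable {R : ℂ → ℂ → M2 d}

lemma hasDerivAt_R_entry
    (hRhol : ∀ a b, DifferentiableOn ℂ (fun p : ℂ × ℂ => R p.1 p.2 a b) (Dtrig ×ˢ Dtrig))
    {z μ : ℂ} (hz : z ∈ Dtrig) (hμ : μ ∈ Dtrig) (a b : Fin d × Fin d) :
    HasDerivAt (fun t => R t μ a b) (dzR R z μ a b) z := by
  have hopen : IsOpen ((Dtrig : Set ℂ) ×ˢ (Dtrig : Set ℂ)) := isOpen_Dtrig.prod isOpen_Dtrig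
  have hdiff : DifferentiableAt ℂ (fun p : ℂ × ℂ => R p.1 p.2 a b) (z, μ) :=
    (hRhol a b).differentiableAt (hopen.mem_nhds ⟨hz, hμ⟩)
  have h1 : DifferentiableAt ℂ (fun t : ℂ => R t μ a b) z :=
    by
      have hg : DifferentiableAt ℂ (fun t : ℂ => (t, μ)) z :=
        differentiableAt_id.prodMk (differentiableAt_const μ)
      have h := hdiff.comp z hg; exact h
  have h2 := h1.hasDerivAt
  rw [dzR]
  exact h2

lemma hasDerivAt_leg_entry
    (hRhol : ∀ a b, DifferentiableOn ℂ (fun p : ℂ × ℂ => R p.1 p.2 a b) (Dtrig ×ˢ Dtrig))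
    {z μ : ℂ} (hz : z ∈ Dtrig) (hμ : μ ∈ Dtrig) (i j : Fin n) (a b : Fin n → Fin d) :
    HasDerivAt (fun t => leg (R t μ) i j a b) (leg (dzR R z μ) i j a b) z := by
  have h := (hasDerivAt_R_entry hRhol hz hμ (a i, a j) (b i, b j)).mul_const
    (∏ k ∈ univ.filter (fun k => k ≠ i ∧ k ≠ j), (if a k = b k then (1 : ℂ) else 0))
  exact h

lemma hasDerivAt_leg_entry_shift
    (hRhol : ∀ a b, DifferentiableOn ℂ (fun p : ℂ × ℂ => R p.1 p.2 a b) (Dtrig ×ˢ Dtrig))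
    {z c μ : ℂ} (hzc : z + c ∈ Dtrig) (hμ : μ ∈ Dtrig) (i j : Fin n) (a b : Fin n → Fin d) :
    HasDerivAt (fun t => leg (R (t + c) μ) i j a b) (leg (dzR R (z + c) μ) i j a b) z := by
  have h := (hasDerivAt_leg_entry hRhol hzc hμ i j a b).comp z ((hasDerivAt_id z).add_const c)
  simpa [Function.comp_def] using h

/-! ### flip and unitarity consequences -/

lemma flip_involutive : flipM d * flipM d = 1 := by
  ext p q
  rw [flip_mul_apply, Matrix.one_apply]
  show (if p.2 = q.2 ∧ p.1 = q.1 then (1:ℂ) else 0) = _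
  by_cases h : p = q
  · rw [if_pos h, if_pos]
    rw [h]
    exact ⟨rfl, rfl⟩
  · rw [if_neg h, if_neg]
    rintro ⟨h1, h2⟩
    exact h (Prod.ext h2 h1)

/-- The scalar function whose derivative gives the diagonal terms. -/
def gg (t : ℂ) : ℂ := (4 * Complex.sin (t / 2) ^ 2)⁻¹

lemma unit_matrix (hskew : SkewSym Dtrig R) (hunit : UnitarityTrig Dtrig R)
    {z μ : ℂ} (hz : z ∈ Dtrig) (hμ : μ ∈ Dtrig) :
    R z μ * R z (-μ) = (gg z - gg μ) • (1 : M2 d) := by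
  have h1 := hunit z hz μ hμ
  have h2 := hskew z hz (-μ) (neg_mem_Dtrig hμ)
  rw [neg_neg] at h2
  have h3 : flipM d * R (-z) μ * flipM d = - R z (-μ) := by
    rw [h2, Matrix.mul_neg, Matrix.neg_mul, neg_inj]
    rw [show flipM d * (flipM d * R z (-μ) * flipM d) * flipM d
        = (flipM d * flipM d) * R z (-μ) * (flipM d * flipM d) by noncomm_ring]
    rw [flip_involutive, one_mul, mul_one]
  rw [h3, Matrix.mul_neg] at h1
  have h4 : R z μ * R z (-μ) = -((1 / (4 * Complex.sin (μ / 2) ^ 2) -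
      1 / (4 * Complex.sin (z / 2) ^ 2)) • (1 : M2 d)) := by
    rw [← h1, neg_neg]
  rw [h4, ← neg_smul]
  congr 1
  rw [gg, gg, one_div, one_div]
  ring

lemma differentiableAt_gg {z : ℂ} (hz : z ∈ Dtrig) : DifferentiableAt ℂ gg z := by
  have h1 : DifferentiableAt ℂ (fun t : ℂ => 4 * Complex.sin (t / 2) ^ 2) z := by fun_prop
  have h2 : 4 * Complex.sin (z / 2) ^ 2 ≠ 0 :=
    mul_ne_zero (by norm_num) (pow_ne_zero _ (mem_Dtrig_iff.1 hz))
  exact h1.inv h2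

lemma dzUnit
    (hRhol : ∀ a b, DifferentiableOn ℂ (fun p : ℂ × ℂ => R p.1 p.2 a b) (Dtrig ×ˢ Dtrig))
    (hskew : SkewSym Dtrig R) (hunit : UnitarityTrig Dtrig R)
    {z μ : ℂ} (hz : z ∈ Dtrig) (hμ : μ ∈ Dtrig) :
    dzR R z μ * R z (-μ) + R z μ * dzR R z (-μ) = (deriv gg z) • (1 : M2 d) := by
  have hμ' := neg_mem_Dtrig hμ
  apply matrix_deriv_eq (L := fun t => R t μ * R t (-μ))
    (M := fun t => (gg t - gg μ) • (1 : M2 d)) (z := z)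
  · filter_upwards [isOpen_Dtrig.mem_nhds hz] with t ht
    exact unit_matrix hskew hunit ht hμ
  · intro a b
    have h := hasDerivAt_matrix_mul (A := fun t => R t μ) (B := fun t => R t (-μ))
      (A' := dzR R z μ) (B' := dzR R z (-μ))
      (fun a b => hasDerivAt_R_entry hRhol hz hμ a b)
      (fun a b => hasDerivAt_R_entry hRhol hz hμ' a b) a b
    exact h
  · intro a b
    have h := ((differentiableAt_gg hz).hasDerivAt.sub_const (gg μ)).mul_const
      ((1 : M2 d) a b)
    have he : ∀ t, ((gg t - gg μ) • (1 : M2 d)) a b = (gg t - gg μ) * (1 : M2 d) a b :=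
      fun t => rfl
    have hv : ((deriv gg z) • (1 : M2 d)) a b = deriv gg z * (1 : M2 d) a b := rfl
    rw [hv]
    exact h.congr_of_eventuallyEq (by filter_upwards with t; rw [he t])

/-! ### properties of deriv gg -/

lemma gg_even (t : ℂ) : gg (-t) = gg t := by
  rw [gg, gg, neg_div, Complex.sin_neg]
  ring_nf

lemma gg_per (t : ℂ) : gg (t + 2 * (Real.pi : ℂ)) = gg t := by
  rw [gg, gg]
  have : (t + 2 * (Real.pi : ℂ)) / 2 = t / 2 + Real.pi := by ring
  rw [this, Complex.sin_add_pi]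
  ring_nf

lemma deriv_gg_odd (z : ℂ) : deriv gg (-z) = -deriv gg z := by
  have h := deriv_comp_neg gg z
  have he : (fun x : ℂ => gg (-x)) = gg := funext gg_even
  rw [he] at h
  rw [h]
  ring

lemma deriv_gg_periodic : Function.Periodic (deriv gg) (2 * (Real.pi : ℂ)) := by
  intro z
  have h := deriv_comp_add_const gg (2 * (Real.pi : ℂ)) z
  have he : (fun x : ℂ => gg (x + 2 * (Real.pi : ℂ))) = gg := funext gg_per
  rw [he] at h
  exact h.symm

lemma deriv_gg_int_per (x : ℂ) (m : ℤ) :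
    deriv gg (x + 2 * (Real.pi : ℂ) * m) = deriv gg x := by
  have h := (deriv_gg_periodic.int_mul m) x
  rw [show (m : ℂ) * (2 * (Real.pi : ℂ)) = 2 * (Real.pi : ℂ) * m by ring] at h
  exact h

end SZaux5

section SZaux6

variable {n d : ℕ} {R : ℂ → ℂ → M2 d}

lemma leg_neg (T : M2 d) (i j : Fin n) : leg (-T) i j = - leg T i j := by
  ext a b
  show (-T) _ _ * _ = -(T _ _ * _)
  rw [Matrix.neg_apply, neg_mul]

lemma offd3_one (a b : Fin 3 → Fin d) : offd (0 : Fin 3) 1 2 a b = 1 := by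
  rw [offd]
  apply Finset.prod_eq_one
  intro m hm
  simp only [Finset.mem_filter, Finset.mem_univ, true_and] at hm
  exfalso
  fin_cases m <;> simp_all

lemma nAYBE (haybe : AYBE Dtrig R) {i j k : Fin n} (hij : i ≠ j) (hjk : j ≠ k)
    (hik : i ≠ k) {z z' μ μ' : ℂ} (hz : z ∈ Dtrig) (hz' : z' ∈ Dtrig)
    (hzz' : z + z' ∈ Dtrig) (hμ : μ ∈ Dtrig) (hμ' : μ' ∈ Dtrig)
    (hμμ' : μ - μ' ∈ Dtrig) (hμ'μ : μ' - μ ∈ Dtrig) :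
    leg (R z μ) i j * leg (R z' μ') j k =
      leg (R (z + z') μ') i k * leg (R z (μ - μ')) i j +
      leg (R z' (μ' - μ)) j k * leg (R (z + z') μ) i k := by
  ext a b
  have h3 := haybe z z' μ μ' hz hz' hzz' hμ hμ' hμμ' hμ'μ
  have h3e := (Matrix.ext_iff.2 h3) (![a i, a j, a k]) (![b i, b j, b k])
  have d01 : (0 : Fin 3) ≠ 1 := by decide
  have d12 : (1 : Fin 3) ≠ 2 := by decide
  have d02 : (0 : Fin 3) ≠ 2 := by decide
  rw [Matrix.add_apply, P1 d01 d12 d02, P2 d01 d12 d02, P3 d01 d12 d02, offd3_one,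
    mul_one, mul_one, mul_one] at h3e
  simp only [Matrix.cons_val_zero, Matrix.cons_val_one, Matrix.head_cons,
    Matrix.cons_val_two, Matrix.tail_cons] at h3e
  rw [Matrix.add_apply, P1 hij hjk hik, P2 hij hjk hik, P3 hij hjk hik, ← add_mul, h3e]

lemma leg_skew_flip (hskew : SkewSym Dtrig R) {z μ : ℂ} (hz : z ∈ Dtrig)
    (hμ : μ ∈ Dtrig) (i j : Fin n) :
    leg (R z μ) j i = - leg (R (-z) (-μ)) i j := by
  rw [leg_swap]
  have h : flipM d * R z μ * flipM d = - R (-z) (-μ) := by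
    rw [hskew z hz μ hμ, neg_neg]
  rw [h, leg_neg]

lemma nAYBE' (haybe : AYBE Dtrig R) (hskew : SkewSym Dtrig R) {i j k : Fin n}
    (hij : i ≠ j) (hjk : j ≠ k) (hik : i ≠ k) {z z' μ μ' : ℂ} (hz : z ∈ Dtrig)
    (hz' : z' ∈ Dtrig) (hzz' : z + z' ∈ Dtrig) (hμ : μ ∈ Dtrig) (hμ' : μ' ∈ Dtrig)
    (hμμ' : μ - μ' ∈ Dtrig) (hμ'μ : μ' - μ ∈ Dtrig) :
    leg (R z μ) j k * leg (R z' μ') i j =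
      leg (R (z + z') μ') i k * leg (R z (μ - μ')) j k +
      leg (R z' (μ' - μ)) i j * leg (R (z + z') μ) i k := by
  have a1 : -z + -z' = -(z + z') := by ring
  have h := nAYBE haybe hjk.symm hij.symm hik.symm (z := -z) (z' := -z')
    (μ := -μ) (μ' := -μ') (neg_mem_Dtrig hz) (neg_mem_Dtrig hz')
    (by rw [a1]; exact neg_mem_Dtrig hzz') (neg_mem_Dtrig hμ) (neg_mem_Dtrig hμ')
    (by rw [show -μ - -μ' = -(μ - μ') by ring]; exact neg_mem_Dtrig hμμ')
    (by rw [show -μ' - -μ = -(μ' - μ) by ring]; exact neg_mem_Dtrig hμ'μ)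
  rw [a1, show -μ - -μ' = -(μ - μ') by ring, show -μ' - -μ = -(μ' - μ) by ring] at h
  have e1 : leg (R (-z) (-μ)) k j = - leg (R z μ) j k := by
    have := leg_skew_flip hskew (neg_mem_Dtrig hz) (neg_mem_Dtrig hμ) j k
    rwa [neg_neg, neg_neg] at this
  have e2 : leg (R (-z') (-μ')) j i = - leg (R z' μ') i j := by
    have := leg_skew_flip hskew (neg_mem_Dtrig hz') (neg_mem_Dtrig hμ') i j
    rwa [neg_neg, neg_neg] at this
  have e3 : leg (R (-(z + z')) (-μ')) k i = - leg (R (z + z') μ') i k := by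
    have := leg_skew_flip hskew (neg_mem_Dtrig hzz') (neg_mem_Dtrig hμ') i k
    rwa [neg_neg, neg_neg] at this
  have e4 : leg (R (-z) (-(μ - μ'))) k j = - leg (R z (μ - μ')) j k := by
    have := leg_skew_flip hskew (neg_mem_Dtrig hz) (neg_mem_Dtrig hμμ') j k
    rwa [neg_neg, neg_neg] at this
  have e5 : leg (R (-z') (-(μ' - μ))) j i = - leg (R z' (μ' - μ)) i j := by
    have := leg_skew_flip hskew (neg_mem_Dtrig hz') (neg_mem_Dtrig hμ'μ) i j
    rwa [neg_neg, neg_neg] at this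
  have e6 : leg (R (-(z + z')) (-μ)) k i = - leg (R (z + z') μ) i k := by
    have := leg_skew_flip hskew (neg_mem_Dtrig hzz') (neg_mem_Dtrig hμ) i k
    rwa [neg_neg, neg_neg] at this
  rw [e1, e2, e3, e4, e5, e6] at h
  simpa [neg_mul_neg] using h

/-! ### shifted derivative helper -/

lemma hasDerivAt_leg_entry_shift'
    (hRhol : ∀ a b, DifferentiableOn ℂ (fun p : ℂ × ℂ => R p.1 p.2 a b) (Dtrig ×ˢ Dtrig))
    {z c μ : ℂ} (hzc : c + z ∈ Dtrig) (hμ : μ ∈ Dtrig) (i j : Fin n) (a b : Fin n → Fin d) :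
    HasDerivAt (fun t => leg (R (c + t) μ) i j a b) (leg (dzR R (c + z) μ) i j a b) z := by
  have h := (hasDerivAt_leg_entry hRhol hzc hμ i j a b).comp z ((hasDerivAt_id z).const_add c)
  simpa [Function.comp_def] using h

/-! ### the four differentiated AYBE identities -/

lemma dAYBE_z
    (hRhol : ∀ a b, DifferentiableOn ℂ (fun p : ℂ × ℂ => R p.1 p.2 a b) (Dtrig ×ˢ Dtrig))
    (haybe : AYBE Dtrig R) {i j k : Fin n} (hij : i ≠ j) (hjk : j ≠ k) (hik : i ≠ k)
    {z z' μ μ' : ℂ} (hz : z ∈ Dtrig) (hz' : z' ∈ Dtrig) (hzz' : z + z' ∈ Dtrig)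
    (hμ : μ ∈ Dtrig) (hμ' : μ' ∈ Dtrig) (hμμ' : μ - μ' ∈ Dtrig) (hμ'μ : μ' - μ ∈ Dtrig) :
    leg (dzR R z μ) i j * leg (R z' μ') j k =
      leg (dzR R (z + z') μ') i k * leg (R z (μ - μ')) i j
      + leg (R (z + z') μ') i k * leg (dzR R z (μ - μ')) i j
      + leg (R z' (μ' - μ)) j k * leg (dzR R (z + z') μ) i k := by
  have hO : IsOpen (Dtrig ∩ (fun t : ℂ => t + z') ⁻¹' Dtrig) :=
    isOpen_Dtrig.inter (isOpen_Dtrig.preimage (by fun_prop))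
  have hadd : leg (dzR R z μ) i j * leg (R z' μ') j k
      = leg (dzR R z μ) i j * leg (R z' μ') j k + leg (R z μ) i j * 0 := by
    rw [Matrix.mul_zero, add_zero]
  rw [hadd]
  have key := matrix_deriv_eq (z := z)
    (L := fun t => leg (R t μ) i j * leg (R z' μ') j k)
    (M := fun t => leg (R (t + z') μ') i k * leg (R t (μ - μ')) i j
      + leg (R z' (μ' - μ)) j k * leg (R (t + z') μ) i k)
    (V := leg (dzR R z μ) i j * leg (R z' μ') j k + leg (R z μ) i j * 0)
    (W := (leg (dzR R (z + z') μ') i k * leg (R z (μ - μ')) i j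
      + leg (R (z + z') μ') i k * leg (dzR R z (μ - μ')) i j)
      + (0 * leg (R (z + z') μ) i k + leg (R z' (μ' - μ)) j k * leg (dzR R (z + z') μ) i k))
    ?_ ?_ ?_
  · rw [key, Matrix.zero_mul, zero_add, add_assoc]
  · filter_upwards [hO.mem_nhds ⟨hz, hzz'⟩] with t ht
    exact nAYBE haybe hij hjk hik ht.1 hz' ht.2 hμ hμ' hμμ' hμ'μ
  · intro a b
    exact hasDerivAt_matrix_mul
      (A := fun t => leg (R t μ) i j) (B := fun _ => leg (R z' μ') j k)
      (A' := leg (dzR R z μ) i j) (B' := 0)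
      (fun a b => hasDerivAt_leg_entry hRhol hz hμ i j a b)
      (fun a b => hasDerivAt_const _ _) a b
  · intro a b
    have h1 := hasDerivAt_matrix_mul
      (A := fun t => leg (R (t + z') μ') i k) (B := fun t => leg (R t (μ - μ')) i j)
      (A' := leg (dzR R (z + z') μ') i k) (B' := leg (dzR R z (μ - μ')) i j)
      (fun a b => hasDerivAt_leg_entry_shift hRhol hzz' hμ' i k a b)
      (fun a b => hasDerivAt_leg_entry hRhol hz hμμ' i j a b) a b
    have h2 := hasDerivAt_matrix_mul
      (A := fun _ => leg (R z' (μ' - μ)) j k) (B := fun t => leg (R (t + z') μ) i k)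
      (A' := 0) (B' := leg (dzR R (z + z') μ) i k)
      (fun a b => hasDerivAt_const _ _)
      (fun a b => hasDerivAt_leg_entry_shift hRhol hzz' hμ i k a b) a b
    exact (h1.add h2)

lemma dAYBE_z'
    (hRhol : ∀ a b, DifferentiableOn ℂ (fun p : ℂ × ℂ => R p.1 p.2 a b) (Dtrig ×ˢ Dtrig))
    (haybe : AYBE Dtrig R) {i j k : Fin n} (hij : i ≠ j) (hjk : j ≠ k) (hik : i ≠ k)
    {z z' μ μ' : ℂ} (hz : z ∈ Dtrig) (hz' : z' ∈ Dtrig) (hzz' : z + z' ∈ Dtrig)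
    (hμ : μ ∈ Dtrig) (hμ' : μ' ∈ Dtrig) (hμμ' : μ - μ' ∈ Dtrig) (hμ'μ : μ' - μ ∈ Dtrig) :
    leg (R z μ) i j * leg (dzR R z' μ') j k =
      leg (dzR R (z + z') μ') i k * leg (R z (μ - μ')) i j
      + leg (dzR R z' (μ' - μ)) j k * leg (R (z + z') μ) i k
      + leg (R z' (μ' - μ)) j k * leg (dzR R (z + z') μ) i k := by
  have hO : IsOpen (Dtrig ∩ (fun t : ℂ => z + t) ⁻¹' Dtrig) :=
    isOpen_Dtrig.inter (isOpen_Dtrig.preimage (by fun_prop))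
  have hadd : leg (R z μ) i j * leg (dzR R z' μ') j k
      = 0 * leg (R z' μ') j k + leg (R z μ) i j * leg (dzR R z' μ') j k := by
    rw [Matrix.zero_mul, zero_add]
  rw [hadd]
  have key := matrix_deriv_eq (z := z')
    (L := fun t => leg (R z μ) i j * leg (R t μ') j k)
    (M := fun t => leg (R (z + t) μ') i k * leg (R z (μ - μ')) i j
      + leg (R t (μ' - μ)) j k * leg (R (z + t) μ) i k)
    (V := 0 * leg (R z' μ') j k + leg (R z μ) i j * leg (dzR R z' μ') j k)
    (W := (leg (dzR R (z + z') μ') i k * leg (R z (μ - μ')) i j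
      + leg (R (z + z') μ') i k * 0)
      + (leg (dzR R z' (μ' - μ)) j k * leg (R (z + z') μ) i k
      + leg (R z' (μ' - μ)) j k * leg (dzR R (z + z') μ) i k))
    ?_ ?_ ?_
  · rw [key, Matrix.mul_zero, add_zero, add_assoc]
  · filter_upwards [hO.mem_nhds ⟨hz', hzz'⟩] with t ht
    exact nAYBE haybe hij hjk hik hz ht.1 ht.2 hμ hμ' hμμ' hμ'μ
  · intro a b
    exact hasDerivAt_matrix_mul
      (A := fun _ => leg (R z μ) i j) (B := fun t => leg (R t μ') j k)
      (A' := 0) (B' := leg (dzR R z' μ') j k)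
      (fun a b => hasDerivAt_const _ _)
      (fun a b => hasDerivAt_leg_entry hRhol hz' hμ' j k a b) a b
  · intro a b
    have h1 := hasDerivAt_matrix_mul
      (A := fun t => leg (R (z + t) μ') i k) (B := fun _ => leg (R z (μ - μ')) i j)
      (A' := leg (dzR R (z + z') μ') i k) (B' := 0)
      (fun a b => hasDerivAt_leg_entry_shift' hRhol hzz' hμ' i k a b)
      (fun a b => hasDerivAt_const _ _) a b
    have h2 := hasDerivAt_matrix_mul
      (A := fun t => leg (R t (μ' - μ)) j k) (B := fun t => leg (R (z + t) μ) i k)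
      (A' := leg (dzR R z' (μ' - μ)) j k) (B' := leg (dzR R (z + z') μ) i k)
      (fun a b => hasDerivAt_leg_entry hRhol hz' hμ'μ j k a b)
      (fun a b => hasDerivAt_leg_entry_shift' hRhol hzz' hμ i k a b) a b
    exact (h1.add h2)

lemma dAYBEp_z
    (hRhol : ∀ a b, DifferentiableOn ℂ (fun p : ℂ × ℂ => R p.1 p.2 a b) (Dtrig ×ˢ Dtrig))
    (haybe : AYBE Dtrig R) (hskew : SkewSym Dtrig R) {i j k : Fin n}
    (hij : i ≠ j) (hjk : j ≠ k) (hik : i ≠ k)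
    {z z' μ μ' : ℂ} (hz : z ∈ Dtrig) (hz' : z' ∈ Dtrig) (hzz' : z + z' ∈ Dtrig)
    (hμ : μ ∈ Dtrig) (hμ' : μ' ∈ Dtrig) (hμμ' : μ - μ' ∈ Dtrig) (hμ'μ : μ' - μ ∈ Dtrig) :
    leg (dzR R z μ) j k * leg (R z' μ') i j =
      leg (dzR R (z + z') μ') i k * leg (R z (μ - μ')) j k
      + leg (R (z + z') μ') i k * leg (dzR R z (μ - μ')) j k
      + leg (R z' (μ' - μ)) i j * leg (dzR R (z + z') μ) i k := by
  have hO : IsOpen (Dtrig ∩ (fun t : ℂ => t + z') ⁻¹' Dtrig) :=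
    isOpen_Dtrig.inter (isOpen_Dtrig.preimage (by fun_prop))
  have hadd : leg (dzR R z μ) j k * leg (R z' μ') i j
      = leg (dzR R z μ) j k * leg (R z' μ') i j + leg (R z μ) j k * 0 := by
    rw [Matrix.mul_zero, add_zero]
  rw [hadd]
  have key := matrix_deriv_eq (z := z)
    (L := fun t => leg (R t μ) j k * leg (R z' μ') i j)
    (M := fun t => leg (R (t + z') μ') i k * leg (R t (μ - μ')) j k
      + leg (R z' (μ' - μ)) i j * leg (R (t + z') μ) i k)
    (V := leg (dzR R z μ) j k * leg (R z' μ') i j + leg (R z μ) j k * 0)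
    (W := (leg (dzR R (z + z') μ') i k * leg (R z (μ - μ')) j k
      + leg (R (z + z') μ') i k * leg (dzR R z (μ - μ')) j k)
      + (0 * leg (R (z + z') μ) i k + leg (R z' (μ' - μ)) i j * leg (dzR R (z + z') μ) i k))
    ?_ ?_ ?_
  · rw [key, Matrix.zero_mul, zero_add, add_assoc]
  · filter_upwards [hO.mem_nhds ⟨hz, hzz'⟩] with t ht
    exact nAYBE' haybe hskew hij hjk hik ht.1 hz' ht.2 hμ hμ' hμμ' hμ'μ
  · intro a b
    exact hasDerivAt_matrix_mul
      (A := fun t => leg (R t μ) j k) (B := fun _ => leg (R z' μ') i j)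
      (A' := leg (dzR R z μ) j k) (B' := 0)
      (fun a b => hasDerivAt_leg_entry hRhol hz hμ j k a b)
      (fun a b => hasDerivAt_const _ _) a b
  · intro a b
    have h1 := hasDerivAt_matrix_mul
      (A := fun t => leg (R (t + z') μ') i k) (B := fun t => leg (R t (μ - μ')) j k)
      (A' := leg (dzR R (z + z') μ') i k) (B' := leg (dzR R z (μ - μ')) j k)
      (fun a b => hasDerivAt_leg_entry_shift hRhol hzz' hμ' i k a b)
      (fun a b => hasDerivAt_leg_entry hRhol hz hμμ' j k a b) a b
    have h2 := hasDerivAt_matrix_mul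
      (A := fun _ => leg (R z' (μ' - μ)) i j) (B := fun t => leg (R (t + z') μ) i k)
      (A' := 0) (B' := leg (dzR R (z + z') μ) i k)
      (fun a b => hasDerivAt_const _ _)
      (fun a b => hasDerivAt_leg_entry_shift hRhol hzz' hμ i k a b) a b
    exact (h1.add h2)

lemma dAYBEp_z'
    (hRhol : ∀ a b, DifferentiableOn ℂ (fun p : ℂ × ℂ => R p.1 p.2 a b) (Dtrig ×ˢ Dtrig))
    (haybe : AYBE Dtrig R) (hskew : SkewSym Dtrig R) {i j k : Fin n}
    (hij : i ≠ j) (hjk : j ≠ k) (hik : i ≠ k)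
    {z z' μ μ' : ℂ} (hz : z ∈ Dtrig) (hz' : z' ∈ Dtrig) (hzz' : z + z' ∈ Dtrig)
    (hμ : μ ∈ Dtrig) (hμ' : μ' ∈ Dtrig) (hμμ' : μ - μ' ∈ Dtrig) (hμ'μ : μ' - μ ∈ Dtrig) :
    leg (R z μ) j k * leg (dzR R z' μ') i j =
      leg (dzR R (z + z') μ') i k * leg (R z (μ - μ')) j k
      + leg (dzR R z' (μ' - μ)) i j * leg (R (z + z') μ) i k
      + leg (R z' (μ' - μ)) i j * leg (dzR R (z + z') μ) i k := by
  have hO : IsOpen (Dtrig ∩ (fun t : ℂ => z + t) ⁻¹' Dtrig) :=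
    isOpen_Dtrig.inter (isOpen_Dtrig.preimage (by fun_prop))
  have hadd : leg (R z μ) j k * leg (dzR R z' μ') i j
      = 0 * leg (R z' μ') i j + leg (R z μ) j k * leg (dzR R z' μ') i j := by
    rw [Matrix.zero_mul, zero_add]
  rw [hadd]
  have key := matrix_deriv_eq (z := z')
    (L := fun t => leg (R z μ) j k * leg (R t μ') i j)
    (M := fun t => leg (R (z + t) μ') i k * leg (R z (μ - μ')) j k
      + leg (R t (μ' - μ)) i j * leg (R (z + t) μ) i k)
    (V := 0 * leg (R z' μ') i j + leg (R z μ) j k * leg (dzR R z' μ') i j)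
    (W := (leg (dzR R (z + z') μ') i k * leg (R z (μ - μ')) j k
      + leg (R (z + z') μ') i k * 0)
      + (leg (dzR R z' (μ' - μ)) i j * leg (R (z + z') μ) i k
      + leg (R z' (μ' - μ)) i j * leg (dzR R (z + z') μ) i k))
    ?_ ?_ ?_
  · rw [key, Matrix.mul_zero, add_zero, add_assoc]
  · filter_upwards [hO.mem_nhds ⟨hz', hzz'⟩] with t ht
    exact nAYBE' haybe hskew hij hjk hik hz ht.1 ht.2 hμ hμ' hμμ' hμ'μ
  · intro a b
    exact hasDerivAt_matrix_mul
      (A := fun _ => leg (R z μ) j k) (B := fun t => leg (R t μ') i j)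
      (A' := 0) (B' := leg (dzR R z' μ') i j)
      (fun a b => hasDerivAt_const _ _)
      (fun a b => hasDerivAt_leg_entry hRhol hz' hμ' i j a b) a b
  · intro a b
    have h1 := hasDerivAt_matrix_mul
      (A := fun t => leg (R (z + t) μ') i k) (B := fun _ => leg (R z (μ - μ')) j k)
      (A' := leg (dzR R (z + z') μ') i k) (B' := 0)
      (fun a b => hasDerivAt_leg_entry_shift' hRhol hzz' hμ' i k a b)
      (fun a b => hasDerivAt_const _ _) a b
    have h2 := hasDerivAt_matrix_mul
      (A := fun t => leg (R t (μ' - μ)) i j) (B := fun t => leg (R (z + t) μ) i k)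
      (A' := leg (dzR R z' (μ' - μ)) i j) (B' := leg (dzR R (z + z') μ) i k)
      (fun a b => hasDerivAt_leg_entry hRhol hz' hμ'μ i j a b)
      (fun a b => hasDerivAt_leg_entry_shift' hRhol hzz' hμ i k a b) a b
    exact (h1.add h2)

end SZaux6

section SZaux7

variable {n d : ℕ} {R : ℂ → ℂ → M2 d}

lemma pi1
    (hRhol : ∀ a b, DifferentiableOn ℂ (fun p : ℂ × ℂ => R p.1 p.2 a b) (Dtrig ×ˢ Dtrig))
    (haybe : AYBE Dtrig R) (hn : (n : ℂ) ≠ 0) {i j k : Fin n}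
    (hij : i ≠ j) (hjk : j ≠ k) (hik : i ≠ k) {x y : ℂ}
    (hx : x ∈ Dtrig) (hy : y ∈ Dtrig) (hxy : x - y ∈ Dtrig) (hyx : y - x ∈ Dtrig) :
    y • (leg (dzR R (znum n i j) x) i j * leg (R (znum n j k) y) j k)
    + x • (leg (dzR R (znum n j k) (y - x)) j k * leg (R (znum n i k) x) i k)
    + (x - y) • (leg (dzR R (znum n i k) y) i k * leg (R (znum n i j) (x - y)) i j)
    = x • (leg (R (znum n i j) x) i j * leg (dzR R (znum n j k) y) j k)
    + (y - x) • (leg (R (znum n j k) (y - x)) j k * leg (dzR R (znum n i k) x) i k)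
    + y • (leg (R (znum n i k) y) i k * leg (dzR R (znum n i j) (x - y)) i j) := by
  have hz12 : znum n i j + znum n j k = znum n i k := znum_add n hn i j k
  have hz1 : znum n i j ∈ Dtrig := znum_mem_Dtrig hij
  have hz2 : znum n j k ∈ Dtrig := znum_mem_Dtrig hjk
  have hz3 : znum n i j + znum n j k ∈ Dtrig := by rw [hz12]; exact znum_mem_Dtrig hik
  rw [← hz12]
  rw [dAYBE_z hRhol haybe hij hjk hik hz1 hz2 hz3 hx hy hxy hyx,
    dAYBE_z' hRhol haybe hij hjk hik hz1 hz2 hz3 hx hy hxy hyx]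
  module

lemma pi2
    (hRhol : ∀ a b, DifferentiableOn ℂ (fun p : ℂ × ℂ => R p.1 p.2 a b) (Dtrig ×ˢ Dtrig))
    (haybe : AYBE Dtrig R) (hskew : SkewSym Dtrig R) (hn : (n : ℂ) ≠ 0) {i j k : Fin n}
    (hij : i ≠ j) (hjk : j ≠ k) (hik : i ≠ k) {w y : ℂ}
    (hw : w ∈ Dtrig) (hy : y ∈ Dtrig) (hwy : w - y ∈ Dtrig) (hyw : y - w ∈ Dtrig) :
    y • (leg (dzR R (znum n j k) w) j k * leg (R (znum n i j) y) i j)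
    + (w - y) • (leg (dzR R (znum n i k) y) i k * leg (R (znum n j k) (w - y)) j k)
    + w • (leg (dzR R (znum n i j) (y - w)) i j * leg (R (znum n i k) w) i k)
    = w • (leg (R (znum n j k) w) j k * leg (dzR R (znum n i j) y) i j)
    + y • (leg (R (znum n i k) y) i k * leg (dzR R (znum n j k) (w - y)) j k)
    + (y - w) • (leg (R (znum n i j) (y - w)) i j * leg (dzR R (znum n i k) w) i k) := by
  have hz21 : znum n j k + znum n i j = znum n i k := by
    rw [add_comm]; exact znum_add n hn i j k
  have hz1 : znum n i j ∈ Dtrig := znum_mem_Dtrig hij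
  have hz2 : znum n j k ∈ Dtrig := znum_mem_Dtrig hjk
  have hz3 : znum n j k + znum n i j ∈ Dtrig := by rw [hz21]; exact znum_mem_Dtrig hik
  rw [← hz21]
  rw [dAYBEp_z hRhol haybe hskew hij hjk hik hz2 hz1 hz3 hw hy hwy hyw,
    dAYBEp_z' hRhol haybe hskew hij hjk hik hz2 hz1 hz3 hw hy hwy hyw]
  module

lemma diag_matrix
    (hRhol : ∀ a b, DifferentiableOn ℂ (fun p : ℂ × ℂ => R p.1 p.2 a b) (Dtrig ×ˢ Dtrig))
    (hskew : SkewSym Dtrig R) (hunit : UnitarityTrig Dtrig R)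
    {i j : Fin n} (hij : i ≠ j) {μ : ℂ} (hμ : μ ∈ Dtrig) :
    leg (dzR R (znum n i j) μ) i j * leg (R (znum n i j) (-μ)) i j
    + leg (R (znum n i j) μ) i j * leg (dzR R (znum n i j) (-μ)) i j
    = (deriv gg (znum n i j)) • (1 : Matrix (Fin n → Fin d) (Fin n → Fin d) ℂ) := by
  rw [leg_mul_same hij, leg_mul_same hij, ← leg_add,
    dzUnit hRhol hskew hunit (znum_mem_Dtrig hij) hμ, leg_smul, leg_one hij]

lemma key_sum {n : ℕ} (hn2 : 2 ≤ n) (i : Fin n) :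
    ∑ j ∈ univ.erase i, deriv gg (znum n i j) = 0 := by
  haveI : NeZero n := ⟨by omega⟩
  have hpair : ∀ j ∈ univ.erase i,
      deriv gg (znum n i j) + deriv gg (znum n i (i + i - j)) = 0 := by
    intro j _
    set τ : Fin n := i + i - j with hτdef
    have h1 : (τ : ℕ) = (n - (j:ℕ) + ((i:ℕ) + (i:ℕ)) % n) % n := by
      rw [hτdef, Fin.sub_def]
      simp [Fin.add_def]
    have hdvd : (n:ℤ) ∣ (((i:ℕ):ℤ) - ((τ:ℕ):ℤ) - (((j:ℕ):ℤ) - ((i:ℕ):ℤ))) := by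
      have hz : ((((i:ℕ):ℤ) - ((τ:ℕ):ℤ) - (((j:ℕ):ℤ) - ((i:ℕ):ℤ)) : ℤ) : ZMod n) = 0 := by
        push_cast
        have hτz : ((τ:ℕ) : ZMod n) = ((i:ℕ) : ZMod n) + ((i:ℕ) : ZMod n) - ((j:ℕ) : ZMod n) := by
          rw [h1]
          rw [ZMod.natCast_mod, Nat.cast_add, ZMod.natCast_mod, Nat.cast_sub (le_of_lt j.isLt)]
          rw [ZMod.natCast_self, Nat.cast_add]
          ring
        rw [hτz]
        ring
      exact (ZMod.intCast_zmod_eq_zero_iff_dvd _ n).1 hz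
    obtain ⟨m, hm⟩ := hdvd
    have hznum : znum n i τ = znum n j i + 2 * (Real.pi:ℂ) * (m : ℂ) := by
      rw [znum, znum]
      have hcast : ((i:ℕ):ℂ) - ((τ:ℕ):ℂ)
          = (((j:ℕ):ℂ) - ((i:ℕ):ℂ)) + (n:ℂ) * (m:ℂ) := by
        have h2 : (((i:ℕ):ℤ) - ((τ:ℕ):ℤ)) = (((j:ℕ):ℤ) - ((i:ℕ):ℤ)) + (n:ℤ) * m := by omega
        exact_mod_cast h2
      have hnc : (n:ℂ) ≠ 0 := Nat.cast_ne_zero.2 (by omega)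
      field_simp
      linear_combination hcast
    rw [hznum, deriv_gg_int_per, znum_neg, deriv_gg_odd]
    ring
  refine Finset.sum_involution (fun j _ => i + i - j) hpair ?_ ?_ ?_
  · intro j hj hfne hfix
    apply hfne
    have h := hpair j hj
    rw [show i + i - j = j from hfix] at h
    have h2 : (2:ℂ) * deriv gg (znum n i j) = 0 := by linear_combination h
    exact (mul_eq_zero.1 h2).resolve_left two_ne_zero
  · intro j hj
    refine Finset.mem_erase.2 ⟨fun h => ?_, Finset.mem_univ _⟩
    have hji : j ≠ i := (Finset.mem_erase.1 hj).1
    apply hji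
    have h2 : i + i = i + j := by
      rw [sub_eq_iff_eq_add] at h
      exact h
    exact (add_left_cancel h2).symm
  · intro j _
    exact sub_sub_cancel _ _

lemma hsum {n : ℕ} (hn2 : 2 ≤ n) (lam : Fin n → ℂ) :
    ∑ p ∈ univ.filter (fun p : Fin n × Fin n => p.1 < p.2),
      (lam p.1 - lam p.2) * deriv gg (znum n p.1 p.2) = 0 := by
  set f : Fin n × Fin n → ℂ :=
    fun p => (lam p.1 - lam p.2) * deriv gg (znum n p.1 p.2) with hf
  have hsymm : ∀ p : Fin n × Fin n, f (p.2, p.1) = f p := by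
    intro p
    show (lam p.2 - lam p.1) * deriv gg (znum n p.2 p.1) = _
    rw [znum_neg, deriv_gg_odd, hf]
    ring
  have hzero_diag : ∀ p : Fin n × Fin n, p.1 = p.2 → f p = 0 := by
    intro p hp
    show (lam p.1 - lam p.2) * _ = 0
    rw [hp, sub_self, zero_mul]
  have htot : ∑ p : Fin n × Fin n, f p = 0 := by
    rw [Fintype.sum_prod_type]
    have hrow : ∀ i, ∑ j, f (i, j) =
        - ∑ j ∈ univ.erase i, lam j * deriv gg (znum n i j) := by
      intro i
      have h0 : ∑ j : Fin n, f (i,j) = ∑ j ∈ univ.erase i, f (i,j) := by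
        rw [← Finset.sum_erase_add univ (fun j => f (i,j)) (Finset.mem_univ i),
          hzero_diag (i,i) rfl, add_zero]
      rw [h0]
      have he : ∑ j ∈ univ.erase i, f (i,j)
          = lam i * (∑ j ∈ univ.erase i, deriv gg (znum n i j))
            - ∑ j ∈ univ.erase i, lam j * deriv gg (znum n i j) := by
        rw [Finset.mul_sum, ← Finset.sum_sub_distrib]
        refine Finset.sum_congr rfl fun j _ => ?_
        show (lam i - lam j) * deriv gg (znum n i j) = _
        ring
      rw [he, key_sum hn2 i, mul_zero, zero_sub]
    rw [Finset.sum_congr rfl (fun i _ => hrow i)]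
    have hexch : (∑ i : Fin n, ∑ j ∈ univ.erase i, lam j * deriv gg (znum n i j)) = 0 := by
      rw [Finset.sum_comm' (s := univ) (t := fun i => univ.erase i) (t' := univ)
        (s' := fun j => univ.erase j) (fun x y => by
          simp only [Finset.mem_univ, Finset.mem_erase, true_and, and_true]
          exact ne_comm)]
      apply Finset.sum_eq_zero
      intro j _
      have hterm : ∀ i ∈ univ.erase j, lam j * deriv gg (znum n i j)
          = lam j * (- deriv gg (znum n j i)) := by
        intro i _
        rw [show znum n i j = -(znum n j i) from znum_neg n j i, deriv_gg_odd]
      rw [Finset.sum_congr rfl hterm, ← Finset.mul_sum]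
      have : (∑ i ∈ univ.erase j, -deriv gg (znum n j i)) = 0 := by
        rw [Finset.sum_neg_distrib, key_sum hn2 j, neg_zero]
      rw [this, mul_zero]
    rw [Finset.sum_neg_distrib, hexch, neg_zero]
  have hdiag_gt : ∑ p ∈ univ.filter (fun p : Fin n × Fin n => ¬ p.1 < p.2), f p
      = ∑ p ∈ univ.filter (fun p : Fin n × Fin n => p.2 < p.1), f p := by
    refine (Finset.sum_subset ?_ ?_).symm
    · intro p hp
      simp only [Finset.mem_filter, Finset.mem_univ, true_and] at hp ⊢
      exact lt_asymm hp
    · intro p hp hnp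
      simp only [Finset.mem_filter, Finset.mem_univ, true_and] at hp hnp
      exact hzero_diag p (le_antisymm (le_of_not_gt hnp) (le_of_not_gt hp))
  have hswap : ∑ p ∈ univ.filter (fun p : Fin n × Fin n => p.2 < p.1), f p
      = ∑ p ∈ univ.filter (fun p : Fin n × Fin n => p.1 < p.2), f p := by
    refine Finset.sum_nbij' (fun p => (p.2, p.1)) (fun p => (p.2, p.1)) ?_ ?_ ?_ ?_ ?_
    · intro p hp
      simp only [Finset.mem_filter, Finset.mem_univ, true_and] at hp ⊢
      exact hp
    · intro p hp
      simp only [Finset.mem_filter, Finset.mem_univ, true_and] at hp ⊢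
      exact hp
    · intro p _; rfl
    · intro p _; rfl
    · intro p _
      exact (hsymm p).symm
  have hsplit := Finset.sum_filter_add_sum_filter_not univ
    (fun p : Fin n × Fin n => p.1 < p.2) f
  rw [hdiag_gt, hswap, htot] at hsplit
  have h2 : (2:ℂ) * (∑ p ∈ univ.filter (fun p : Fin n × Fin n => p.1 < p.2), f p) = 0 := by
    linear_combination hsplit
  exact (mul_eq_zero.1 h2).resolve_left two_ne_zero

end SZaux7

section SZaux8

variable {n d : ℕ} {R : ℂ → ℂ → M2 d}

/-- The generic summand of `H2vee ∘ Ivee`. -/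
def Lterm (R : ℂ → ℂ → M2 d) (F : (Fin n → ℂ) → Uspin n d) (lam : Fin n → ℂ)
    (p q : Fin n × Fin n) : Uspin n d :=
  ((lam ∘ ⇑(Equiv.swap p.1 p.2)) q.1 - (lam ∘ ⇑(Equiv.swap p.1 p.2)) q.2) •
    (leg (dzR R (znum n p.1 p.2) (lam p.1 - lam p.2)) p.1 p.2 *
      leg (R (znum n q.1 q.2)
        ((lam ∘ ⇑(Equiv.swap p.1 p.2)) q.1 - (lam ∘ ⇑(Equiv.swap p.1 p.2)) q.2)) q.1 q.2).mulVec
      (F (lam ∘ ⇑(Equiv.swap p.1 p.2) ∘ ⇑(Equiv.swap q.1 q.2)))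

/-- The generic summand of `Ivee ∘ H2vee`. -/
def Rterm (R : ℂ → ℂ → M2 d) (F : (Fin n → ℂ) → Uspin n d) (lam : Fin n → ℂ)
    (p q : Fin n × Fin n) : Uspin n d :=
  (lam p.1 - lam p.2) •
    (leg (R (znum n p.1 p.2) (lam p.1 - lam p.2)) p.1 p.2 *
      leg (dzR R (znum n q.1 q.2)
        ((lam ∘ ⇑(Equiv.swap p.1 p.2)) q.1 - (lam ∘ ⇑(Equiv.swap p.1 p.2)) q.2)) q.1 q.2).mulVec
      (F (lam ∘ ⇑(Equiv.swap p.1 p.2) ∘ ⇑(Equiv.swap q.1 q.2)))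

lemma mulVec_sum {ι : Type*} [Fintype ι] (A : Matrix ι ι ℂ) {κ : Type*} (s : Finset κ)
    (v : κ → ι → ℂ) : A.mulVec (∑ x ∈ s, v x) = ∑ x ∈ s, A.mulVec (v x) := by
  simpa only [Matrix.mulVecLin_apply] using map_sum (Matrix.mulVecLin A) v s

lemma three_smul_mulVec {ι : Type*} [Fintype ι] (M1 M2 M3 : Matrix ι ι ℂ)
    (c1 c2 c3 : ℂ) (v : ι → ℂ) :
    c1 • M1.mulVec v + c2 • M2.mulVec v + c3 • M3.mulVec v
      = (c1 • M1 + c2 • M2 + c3 • M3).mulVec v := by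
  rw [Matrix.add_mulVec, Matrix.add_mulVec, Matrix.smul_mulVec,
    Matrix.smul_mulVec, Matrix.smul_mulVec]

/-! ### swap composition lemmas -/

section swaps
variable {α β : Type*} [DecidableEq α] (lam : α → β) {a b c : α}

lemma swap_comp_pi1a (hab : a ≠ b) (hbc : b ≠ c) (hac : a ≠ c) :
    lam ∘ ⇑(Equiv.swap b c) ∘ ⇑(Equiv.swap a c) = lam ∘ ⇑(Equiv.swap a b) ∘ ⇑(Equiv.swap b c) := by
  funext m
  simp only [Function.comp_apply, Equiv.swap_apply_def]
  split_ifs <;> simp_all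

lemma swap_comp_pi1b (hab : a ≠ b) (hbc : b ≠ c) (hac : a ≠ c) :
    lam ∘ ⇑(Equiv.swap a c) ∘ ⇑(Equiv.swap a b) = lam ∘ ⇑(Equiv.swap a b) ∘ ⇑(Equiv.swap b c) := by
  funext m
  simp only [Function.comp_apply, Equiv.swap_apply_def]
  split_ifs <;> simp_all

lemma swap_comp_pi2a (hab : a ≠ b) (hbc : b ≠ c) (hac : a ≠ c) :
    lam ∘ ⇑(Equiv.swap a c) ∘ ⇑(Equiv.swap b c) = lam ∘ ⇑(Equiv.swap b c) ∘ ⇑(Equiv.swap a b) := by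
  funext m
  simp only [Function.comp_apply, Equiv.swap_apply_def]
  split_ifs <;> simp_all

lemma swap_comp_pi2b (hab : a ≠ b) (hbc : b ≠ c) (hac : a ≠ c) :
    lam ∘ ⇑(Equiv.swap a b) ∘ ⇑(Equiv.swap a c) = lam ∘ ⇑(Equiv.swap b c) ∘ ⇑(Equiv.swap a b) := by
  funext m
  simp only [Function.comp_apply, Equiv.swap_apply_def]
  split_ifs <;> simp_all

lemma swap_comp_disj {i j k l : α} (hik : i ≠ k) (hil : i ≠ l) (hjk : j ≠ k) (hjl : j ≠ l) :
    lam ∘ ⇑(Equiv.swap i j) ∘ ⇑(Equiv.swap k l) = lam ∘ ⇑(Equiv.swap k l) ∘ ⇑(Equiv.swap i j) := by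
  funext m
  simp only [Function.comp_apply, Equiv.swap_apply_def]
  split_ifs <;> simp_all

end swaps

/-! ### the two bracket identities applied to a vector -/

lemma bracket1
    (hRhol : ∀ a b, DifferentiableOn ℂ (fun p : ℂ × ℂ => R p.1 p.2 a b) (Dtrig ×ˢ Dtrig))
    (haybe : AYBE Dtrig R) (hn : (n : ℂ) ≠ 0) {a b c : Fin n}
    (hab : a ≠ b) (hbc : b ≠ c) (hac : a ≠ c) {x y : ℂ}
    (hx : x ∈ Dtrig) (hy : y ∈ Dtrig) (hxy : x - y ∈ Dtrig) (hyx : y - x ∈ Dtrig)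
    (v : Uspin n d) :
    y • (leg (dzR R (znum n a b) x) a b * leg (R (znum n b c) y) b c).mulVec v
    + x • (leg (dzR R (znum n b c) (y - x)) b c * leg (R (znum n a c) x) a c).mulVec v
    + (x - y) • (leg (dzR R (znum n a c) y) a c * leg (R (znum n a b) (x - y)) a b).mulVec v
    = x • (leg (R (znum n a b) x) a b * leg (dzR R (znum n b c) y) b c).mulVec v
    + (y - x) • (leg (R (znum n b c) (y - x)) b c * leg (dzR R (znum n a c) x) a c).mulVec v
    + y • (leg (R (znum n a c) y) a c * leg (dzR R (znum n a b) (x - y)) a b).mulVec v := by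
  rw [three_smul_mulVec, three_smul_mulVec, pi1 hRhol haybe hn hab hbc hac hx hy hxy hyx]

lemma bracket2
    (hRhol : ∀ a b, DifferentiableOn ℂ (fun p : ℂ × ℂ => R p.1 p.2 a b) (Dtrig ×ˢ Dtrig))
    (haybe : AYBE Dtrig R) (hskew : SkewSym Dtrig R) (hn : (n : ℂ) ≠ 0) {a b c : Fin n}
    (hab : a ≠ b) (hbc : b ≠ c) (hac : a ≠ c) {w y : ℂ}
    (hw : w ∈ Dtrig) (hy : y ∈ Dtrig) (hwy : w - y ∈ Dtrig) (hyw : y - w ∈ Dtrig)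
    (v : Uspin n d) :
    y • (leg (dzR R (znum n b c) w) b c * leg (R (znum n a b) y) a b).mulVec v
    + (w - y) • (leg (dzR R (znum n a c) y) a c * leg (R (znum n b c) (w - y)) b c).mulVec v
    + w • (leg (dzR R (znum n a b) (y - w)) a b * leg (R (znum n a c) w) a c).mulVec v
    = w • (leg (R (znum n b c) w) b c * leg (dzR R (znum n a b) y) a b).mulVec v
    + y • (leg (R (znum n a c) y) a c * leg (dzR R (znum n b c) (w - y)) b c).mulVec v
    + (y - w) • (leg (R (znum n a b) (y - w)) a b * leg (dzR R (znum n a c) w) a c).mulVec v := by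
  rw [three_smul_mulVec, three_smul_mulVec, pi2 hRhol haybe hskew hn hab hbc hac hw hy hwy hyw]

/-! ### per-class term computations -/

lemma diag_term
    (hRhol : ∀ a b, DifferentiableOn ℂ (fun p : ℂ × ℂ => R p.1 p.2 a b) (Dtrig ×ˢ Dtrig))
    (hskew : SkewSym Dtrig R) (hunit : UnitarityTrig Dtrig R)
    {i j : Fin n} (hij : i ≠ j) (lam : Fin n → ℂ) (hμ : lam i - lam j ∈ Dtrig)
    (F : (Fin n → ℂ) → Uspin n d) :
    Lterm R F lam (i, j) (i, j) - Rterm R F lam (i, j) (i, j)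
      = (-((lam i - lam j) * deriv gg (znum n i j))) • F lam := by
  have hss : lam ∘ ⇑(Equiv.swap i j) ∘ ⇑(Equiv.swap i j) = lam := by
    funext m
    simp [Equiv.swap_apply_self]
  rw [Lterm, Rterm]
  simp only [Function.comp_apply, Equiv.swap_apply_left, Equiv.swap_apply_right]
  rw [hss]
  rw [show lam j - lam i = -(lam i - lam j) from by ring]
  rw [sub_eq_add_neg, ← neg_smul, ← smul_add, ← Matrix.add_mulVec]
  rw [diag_matrix hRhol hskew hunit hij hμ]
  rw [Matrix.smul_mulVec, Matrix.one_mulVec, smul_smul]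
  congr 1
  ring

lemma disjoint_term {i j k l : Fin n} (hij : i ≠ j) (hik : i ≠ k) (hil : i ≠ l)
    (hjk : j ≠ k) (hjl : j ≠ l) (hkl : k ≠ l) (lam : Fin n → ℂ)
    (F : (Fin n → ℂ) → Uspin n d) :
    Lterm R F lam (i, j) (k, l) = Rterm R F lam (k, l) (i, j) := by
  rw [Lterm, Rterm]
  simp only [Function.comp_apply]
  rw [Equiv.swap_apply_of_ne_of_ne hik.symm hjk.symm, Equiv.swap_apply_of_ne_of_ne hil.symm hjl.symm,
    Equiv.swap_apply_of_ne_of_ne hik hil, Equiv.swap_apply_of_ne_of_ne hjk hjl]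
  rw [leg_disjoint_comm hij hik hil hjk hjl hkl]
  rw [swap_comp_disj lam hik hil hjk hjl]

lemma triple_term
    (hRhol : ∀ a b, DifferentiableOn ℂ (fun p : ℂ × ℂ => R p.1 p.2 a b) (Dtrig ×ˢ Dtrig))
    (haybe : AYBE Dtrig R) (hskew : SkewSym Dtrig R) (hn : (n : ℂ) ≠ 0)
    {a b c : Fin n} (hab : a ≠ b) (hbc : b ≠ c) (hac : a ≠ c) (lam : Fin n → ℂ)
    (hD : ∀ i j : Fin n, i ≠ j → lam i - lam j ∈ Dtrig)
    (F : (Fin n → ℂ) → Uspin n d) :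
    (Lterm R F lam (a,b) (b,c) - Rterm R F lam (b,c) (a,b))
    + (Lterm R F lam (b,c) (a,b) - Rterm R F lam (a,b) (b,c))
    + (Lterm R F lam (a,b) (a,c) - Rterm R F lam (a,c) (a,b))
    + (Lterm R F lam (a,c) (a,b) - Rterm R F lam (a,b) (a,c))
    + (Lterm R F lam (a,c) (b,c) - Rterm R F lam (b,c) (a,c))
    + (Lterm R F lam (b,c) (a,c) - Rterm R F lam (a,c) (b,c)) = 0 := by
  have hx := hD a b hab
  have hy := hD a c hac
  have hw := hD b c hbc
  have hxy : (lam a - lam b) - (lam a - lam c) ∈ Dtrig := by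
    rw [show (lam a - lam b) - (lam a - lam c) = lam c - lam b from by ring]
    exact hD c b (Ne.symm hbc)
  have hyx : (lam a - lam c) - (lam a - lam b) ∈ Dtrig := by
    rw [show (lam a - lam c) - (lam a - lam b) = lam b - lam c from by ring]
    exact hD b c hbc
  have hwy : (lam b - lam c) - (lam a - lam c) ∈ Dtrig := by
    rw [show (lam b - lam c) - (lam a - lam c) = lam b - lam a from by ring]
    exact hD b a (Ne.symm hab)
  have hyw : (lam a - lam c) - (lam b - lam c) ∈ Dtrig := by
    rw [show (lam a - lam c) - (lam b - lam c) = lam a - lam b from by ring]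
    exact hD a b hab
  have h1 := bracket1 hRhol haybe hn hab hbc hac hx hy hxy hyx
    (F (lam ∘ ⇑(Equiv.swap a b) ∘ ⇑(Equiv.swap b c)))
  have h2 := bracket2 hRhol haybe hskew hn hab hbc hac hw hy hwy hyw
    (F (lam ∘ ⇑(Equiv.swap b c) ∘ ⇑(Equiv.swap a b)))
  rw [show (lam a - lam c) - (lam a - lam b) = lam b - lam c from by ring,
    show (lam a - lam b) - (lam a - lam c) = lam c - lam b from by ring] at h1
  rw [show (lam b - lam c) - (lam a - lam c) = lam b - lam a from by ring,
    show (lam a - lam c) - (lam b - lam c) = lam a - lam b from by ring] at h2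
  simp only [Lterm, Rterm]
  simp only [Function.comp_apply, Equiv.swap_apply_left, Equiv.swap_apply_right,
    Equiv.swap_apply_of_ne_of_ne (Ne.symm hac) (Ne.symm hbc),
    Equiv.swap_apply_of_ne_of_ne hab hac,
    Equiv.swap_apply_of_ne_of_ne (Ne.symm hab) hbc]
  rw [swap_comp_pi1a lam hab hbc hac, swap_comp_pi1b lam hab hbc hac,
    swap_comp_pi2a lam hab hbc hac, swap_comp_pi2b lam hab hbc hac]
  linear_combination (norm := abel) h1 + h2

end SZaux8

section SZaux8b

variable {n d : ℕ} {R : ℂ → ℂ → M2 d}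

lemma Gzero
    (hRhol : ∀ a b, DifferentiableOn ℂ (fun p : ℂ × ℂ => R p.1 p.2 a b) (Dtrig ×ˢ Dtrig))
    (haybe : AYBE Dtrig R) (hskew : SkewSym Dtrig R) (hunit : UnitarityTrig Dtrig R)
    (hn2 : 2 ≤ n) (hnc : (n : ℂ) ≠ 0) (lam : Fin n → ℂ)
    (hD : ∀ i j : Fin n, i ≠ j → lam i - lam j ∈ Dtrig)
    (F : (Fin n → ℂ) → Uspin n d) :
    ∑ r ∈ (univ.filter (fun q : Fin n × Fin n => q.1 < q.2)) ×ˢ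
        (univ.filter (fun q : Fin n × Fin n => q.1 < q.2)),
      (Lterm R F lam r.1 r.2 - Rterm R F lam r.2 r.1) = 0 := by
  have hK0 : ∑ r ∈ ((univ.filter (fun q : Fin n × Fin n => q.1 < q.2)) ×ˢ
        (univ.filter (fun q : Fin n × Fin n => q.1 < q.2))).filter
        (fun r => r.1 = r.2),
      (Lterm R F lam r.1 r.2 - Rterm R F lam r.2 r.1) = 0 := by
    have hval : ∀ r ∈ ((univ.filter (fun q : Fin n × Fin n => q.1 < q.2)) ×ˢ
        (univ.filter (fun q : Fin n × Fin n => q.1 < q.2))).filter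
        (fun r => r.1 = r.2),
        (Lterm R F lam r.1 r.2 - Rterm R F lam r.2 r.1)
          = (-((lam r.1.1 - lam r.1.2) * deriv gg (znum n r.1.1 r.1.2))) • F lam := by
      intro r hr
      simp only [Finset.mem_filter, Finset.mem_product, Finset.mem_univ, true_and] at hr
      obtain ⟨⟨h1, h2⟩, h3⟩ := hr
      have hij := ne_of_lt h1
      rw [← h3]
      exact diag_term hRhol hskew hunit hij lam (hD _ _ hij) F
    rw [Finset.sum_congr rfl hval, ← Finset.sum_smul]
    have hco : ∑ r ∈ ((univ.filter (fun q : Fin n × Fin n => q.1 < q.2)) ×ˢ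
        (univ.filter (fun q : Fin n × Fin n => q.1 < q.2))).filter
        (fun r => r.1 = r.2),
        (-((lam r.1.1 - lam r.1.2) * deriv gg (znum n r.1.1 r.1.2))) = 0 := by
      rw [Finset.sum_nbij' (i := fun r : (Fin n × Fin n) × (Fin n × Fin n) => r.1)
        (j := fun p : Fin n × Fin n => (p, p))
        (t := univ.filter (fun q : Fin n × Fin n => q.1 < q.2))
        (g := fun p => (-((lam p.1 - lam p.2) * deriv gg (znum n p.1 p.2))))
        ?_ ?_ ?_ ?_ ?_]
      · rw [Finset.sum_neg_distrib, hsum hn2 lam, neg_zero]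
      · intro r hr
        simp only [Finset.mem_filter, Finset.mem_product, Finset.mem_univ, true_and] at hr ⊢
        exact hr.1.1
      · intro p hp
        simp only [Finset.mem_filter, Finset.mem_product, Finset.mem_univ, true_and] at hp ⊢
        exact ⟨⟨hp, hp⟩, trivial⟩
      · intro r hr
        simp only [Finset.mem_filter, Finset.mem_product, Finset.mem_univ, true_and] at hr
        exact Prod.ext rfl hr.2
      · intro p _
        rfl
      · intro r _
        rfl
    rw [hco, zero_smul]
  have hK1 : (∑ r ∈ (((univ.filter (fun q : Fin n × Fin n => q.1 < q.2)) ×ˢ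
        (univ.filter (fun q : Fin n × Fin n => q.1 < q.2))).filter
        (fun r => ¬r.1 = r.2)).filter
        (fun r => r.1.2 = r.2.1), (Lterm R F lam r.1 r.2 - Rterm R F lam r.2 r.1))
      = ∑ t ∈ univ.filter (fun t : Fin n × Fin n × Fin n => t.1 < t.2.1 ∧ t.2.1 < t.2.2), (Lterm R F lam (t.1, t.2.1) (t.2.1, t.2.2) - Rterm R F lam (t.2.1, t.2.2) (t.1, t.2.1)) := by
    refine Finset.sum_nbij' (fun r : (Fin n × Fin n) × (Fin n × Fin n) => (r.1.1, r.1.2, r.2.2))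
      (fun t : Fin n × Fin n × Fin n => ((t.1, t.2.1), (t.2.1, t.2.2))) ?_ ?_ ?_ ?_ ?_
    · intro r hr
      simp only [Finset.mem_filter, Finset.mem_product, Finset.mem_univ, true_and,
        Prod.ext_iff, Prod.mk.injEq, Fin.lt_def, Fin.ext_iff, not_and, and_true] at hr ⊢
      omega
    · intro t ht
      simp only [Finset.mem_filter, Finset.mem_product, Finset.mem_univ, true_and,
        Prod.ext_iff, Prod.mk.injEq, Fin.lt_def, Fin.ext_iff, not_and, and_true] at ht ⊢
      omega
    · intro r hr
      simp only [Finset.mem_filter, Finset.mem_product, Finset.mem_univ, true_and] at hr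
      obtain ⟨⟨⟨h1, h2⟩, h3⟩, h4⟩ := hr
      have e2 : ((r.1.2 : Fin n), r.2.2) = r.2 := by rw [h4]
      have heq : (((r.1.1, r.1.2), (r.1.2, r.2.2)) :
          (Fin n × Fin n) × (Fin n × Fin n)) = r := by
        rw [e2]
      exact heq
    · intro t _
      rfl
    · intro r hr
      simp only [Finset.mem_filter, Finset.mem_product, Finset.mem_univ, true_and] at hr
      obtain ⟨⟨⟨h1, h2⟩, h3⟩, h4⟩ := hr
      have e2 : ((r.1.2 : Fin n), r.2.2) = r.2 := by rw [h4]
      have heq : (((r.1.1, r.1.2), (r.1.2, r.2.2)) :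
          (Fin n × Fin n) × (Fin n × Fin n)) = r := by
        rw [e2]
      exact (congrArg (fun s : (Fin n × Fin n) × (Fin n × Fin n) =>
        Lterm R F lam s.1 s.2 - Rterm R F lam s.2 s.1) heq).symm
  have hK2 : (∑ r ∈ ((((univ.filter (fun q : Fin n × Fin n => q.1 < q.2)) ×ˢ
        (univ.filter (fun q : Fin n × Fin n => q.1 < q.2))).filter
        (fun r => ¬r.1 = r.2)).filter
        (fun r => ¬r.1.2 = r.2.1)).filter
        (fun r => r.1.1 = r.2.2), (Lterm R F lam r.1 r.2 - Rterm R F lam r.2 r.1))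
      = ∑ t ∈ univ.filter (fun t : Fin n × Fin n × Fin n => t.1 < t.2.1 ∧ t.2.1 < t.2.2), (Lterm R F lam (t.2.1, t.2.2) (t.1, t.2.1) - Rterm R F lam (t.1, t.2.1) (t.2.1, t.2.2)) := by
    refine Finset.sum_nbij' (fun r : (Fin n × Fin n) × (Fin n × Fin n) => (r.2.1, r.2.2, r.1.2))
      (fun t : Fin n × Fin n × Fin n => ((t.2.1, t.2.2), (t.1, t.2.1))) ?_ ?_ ?_ ?_ ?_
    · intro r hr
      simp only [Finset.mem_filter, Finset.mem_product, Finset.mem_univ, true_and,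
        Prod.ext_iff, Prod.mk.injEq, Fin.lt_def, Fin.ext_iff, not_and, and_true] at hr ⊢
      omega
    · intro t ht
      simp only [Finset.mem_filter, Finset.mem_product, Finset.mem_univ, true_and,
        Prod.ext_iff, Prod.mk.injEq, Fin.lt_def, Fin.ext_iff, not_and, and_true] at ht ⊢
      omega
    · intro r hr
      simp only [Finset.mem_filter, Finset.mem_product, Finset.mem_univ, true_and] at hr
      obtain ⟨⟨⟨⟨h1, h2⟩, h3⟩, h4⟩, h5⟩ := hr
      have e1 : ((r.2.2 : Fin n), r.1.2) = r.1 := by rw [← h5]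
      have heq : (((r.2.2, r.1.2), (r.2.1, r.2.2)) :
          (Fin n × Fin n) × (Fin n × Fin n)) = r := by
        rw [e1]
      exact heq
    · intro t _
      rfl
    · intro r hr
      simp only [Finset.mem_filter, Finset.mem_product, Finset.mem_univ, true_and] at hr
      obtain ⟨⟨⟨⟨h1, h2⟩, h3⟩, h4⟩, h5⟩ := hr
      have e1 : ((r.2.2 : Fin n), r.1.2) = r.1 := by rw [← h5]
      have heq : (((r.2.2, r.1.2), (r.2.1, r.2.2)) :
          (Fin n × Fin n) × (Fin n × Fin n)) = r := by
        rw [e1]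
      exact (congrArg (fun s : (Fin n × Fin n) × (Fin n × Fin n) =>
        Lterm R F lam s.1 s.2 - Rterm R F lam s.2 s.1) heq).symm
  have hK3a : (∑ r ∈ ((((((univ.filter (fun q : Fin n × Fin n => q.1 < q.2)) ×ˢ
        (univ.filter (fun q : Fin n × Fin n => q.1 < q.2))).filter
        (fun r => ¬r.1 = r.2)).filter
        (fun r => ¬r.1.2 = r.2.1)).filter
        (fun r => ¬r.1.1 = r.2.2)).filter
        (fun r => r.1.1 = r.2.1)).filter
        (fun r => r.1.2 < r.2.2), (Lterm R F lam r.1 r.2 - Rterm R F lam r.2 r.1))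
      = ∑ t ∈ univ.filter (fun t : Fin n × Fin n × Fin n => t.1 < t.2.1 ∧ t.2.1 < t.2.2), (Lterm R F lam (t.1, t.2.1) (t.1, t.2.2) - Rterm R F lam (t.1, t.2.2) (t.1, t.2.1)) := by
    refine Finset.sum_nbij' (fun r : (Fin n × Fin n) × (Fin n × Fin n) => (r.1.1, r.1.2, r.2.2))
      (fun t : Fin n × Fin n × Fin n => ((t.1, t.2.1), (t.1, t.2.2))) ?_ ?_ ?_ ?_ ?_
    · intro r hr
      simp only [Finset.mem_filter, Finset.mem_product, Finset.mem_univ, true_and,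
        Prod.ext_iff, Prod.mk.injEq, Fin.lt_def, Fin.ext_iff, not_and, and_true] at hr ⊢
      omega
    · intro t ht
      simp only [Finset.mem_filter, Finset.mem_product, Finset.mem_univ, true_and,
        Prod.ext_iff, Prod.mk.injEq, Fin.lt_def, Fin.ext_iff, not_and, and_true] at ht ⊢
      omega
    · intro r hr
      simp only [Finset.mem_filter, Finset.mem_product, Finset.mem_univ, true_and] at hr
      obtain ⟨⟨⟨⟨⟨⟨h1, h2⟩, h3⟩, h4⟩, h5⟩, h6⟩, h7⟩ := hr
      have e2 : ((r.1.1 : Fin n), r.2.2) = r.2 := by rw [h6]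
      have heq : (((r.1.1, r.1.2), (r.1.1, r.2.2)) :
          (Fin n × Fin n) × (Fin n × Fin n)) = r := by
        rw [e2]
      exact heq
    · intro t _
      rfl
    · intro r hr
      simp only [Finset.mem_filter, Finset.mem_product, Finset.mem_univ, true_and] at hr
      obtain ⟨⟨⟨⟨⟨⟨h1, h2⟩, h3⟩, h4⟩, h5⟩, h6⟩, h7⟩ := hr
      have e2 : ((r.1.1 : Fin n), r.2.2) = r.2 := by rw [h6]
      have heq : (((r.1.1, r.1.2), (r.1.1, r.2.2)) :
          (Fin n × Fin n) × (Fin n × Fin n)) = r := by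
        rw [e2]
      exact (congrArg (fun s : (Fin n × Fin n) × (Fin n × Fin n) =>
        Lterm R F lam s.1 s.2 - Rterm R F lam s.2 s.1) heq).symm
  have hK3b : (∑ r ∈ ((((((univ.filter (fun q : Fin n × Fin n => q.1 < q.2)) ×ˢ
        (univ.filter (fun q : Fin n × Fin n => q.1 < q.2))).filter
        (fun r => ¬r.1 = r.2)).filter
        (fun r => ¬r.1.2 = r.2.1)).filter
        (fun r => ¬r.1.1 = r.2.2)).filter
        (fun r => r.1.1 = r.2.1)).filter
        (fun r => ¬r.1.2 < r.2.2), (Lterm R F lam r.1 r.2 - Rterm R F lam r.2 r.1))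
      = ∑ t ∈ univ.filter (fun t : Fin n × Fin n × Fin n => t.1 < t.2.1 ∧ t.2.1 < t.2.2), (Lterm R F lam (t.1, t.2.2) (t.1, t.2.1) - Rterm R F lam (t.1, t.2.1) (t.1, t.2.2)) := by
    refine Finset.sum_nbij' (fun r : (Fin n × Fin n) × (Fin n × Fin n) => (r.1.1, r.2.2, r.1.2))
      (fun t : Fin n × Fin n × Fin n => ((t.1, t.2.2), (t.1, t.2.1))) ?_ ?_ ?_ ?_ ?_
    · intro r hr
      simp only [Finset.mem_filter, Finset.mem_product, Finset.mem_univ, true_and,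
        Prod.ext_iff, Prod.mk.injEq, Fin.lt_def, Fin.ext_iff, not_and, and_true] at hr ⊢
      omega
    · intro t ht
      simp only [Finset.mem_filter, Finset.mem_product, Finset.mem_univ, true_and,
        Prod.ext_iff, Prod.mk.injEq, Fin.lt_def, Fin.ext_iff, not_and, and_true] at ht ⊢
      omega
    · intro r hr
      simp only [Finset.mem_filter, Finset.mem_product, Finset.mem_univ, true_and] at hr
      obtain ⟨⟨⟨⟨⟨⟨h1, h2⟩, h3⟩, h4⟩, h5⟩, h6⟩, h7⟩ := hr
      have e2 : ((r.1.1 : Fin n), r.2.2) = r.2 := by rw [h6]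
      have heq : (((r.1.1, r.1.2), (r.1.1, r.2.2)) :
          (Fin n × Fin n) × (Fin n × Fin n)) = r := by
        rw [e2]
      exact heq
    · intro t _
      rfl
    · intro r hr
      simp only [Finset.mem_filter, Finset.mem_product, Finset.mem_univ, true_and] at hr
      obtain ⟨⟨⟨⟨⟨⟨h1, h2⟩, h3⟩, h4⟩, h5⟩, h6⟩, h7⟩ := hr
      have e2 : ((r.1.1 : Fin n), r.2.2) = r.2 := by rw [h6]
      have heq : (((r.1.1, r.1.2), (r.1.1, r.2.2)) :
          (Fin n × Fin n) × (Fin n × Fin n)) = r := by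
        rw [e2]
      exact (congrArg (fun s : (Fin n × Fin n) × (Fin n × Fin n) =>
        Lterm R F lam s.1 s.2 - Rterm R F lam s.2 s.1) heq).symm
  have hK4a : (∑ r ∈ (((((((univ.filter (fun q : Fin n × Fin n => q.1 < q.2)) ×ˢ
        (univ.filter (fun q : Fin n × Fin n => q.1 < q.2))).filter
        (fun r => ¬r.1 = r.2)).filter
        (fun r => ¬r.1.2 = r.2.1)).filter
        (fun r => ¬r.1.1 = r.2.2)).filter
        (fun r => ¬r.1.1 = r.2.1)).filter
        (fun r => r.1.2 = r.2.2)).filter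
        (fun r => r.1.1 < r.2.1), (Lterm R F lam r.1 r.2 - Rterm R F lam r.2 r.1))
      = ∑ t ∈ univ.filter (fun t : Fin n × Fin n × Fin n => t.1 < t.2.1 ∧ t.2.1 < t.2.2), (Lterm R F lam (t.1, t.2.2) (t.2.1, t.2.2) - Rterm R F lam (t.2.1, t.2.2) (t.1, t.2.2)) := by
    refine Finset.sum_nbij' (fun r : (Fin n × Fin n) × (Fin n × Fin n) => (r.1.1, r.2.1, r.1.2))
      (fun t : Fin n × Fin n × Fin n => ((t.1, t.2.2), (t.2.1, t.2.2))) ?_ ?_ ?_ ?_ ?_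
    · intro r hr
      simp only [Finset.mem_filter, Finset.mem_product, Finset.mem_univ, true_and,
        Prod.ext_iff, Prod.mk.injEq, Fin.lt_def, Fin.ext_iff, not_and, and_true] at hr ⊢
      omega
    · intro t ht
      simp only [Finset.mem_filter, Finset.mem_product, Finset.mem_univ, true_and,
        Prod.ext_iff, Prod.mk.injEq, Fin.lt_def, Fin.ext_iff, not_and, and_true] at ht ⊢
      omega
    · intro r hr
      simp only [Finset.mem_filter, Finset.mem_product, Finset.mem_univ, true_and] at hr
      obtain ⟨⟨⟨⟨⟨⟨⟨h1, h2⟩, h3⟩, h4⟩, h5⟩, h6⟩, h7⟩, h8⟩ := hr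
      have e2 : ((r.2.1 : Fin n), r.1.2) = r.2 := by rw [h7]
      have heq : (((r.1.1, r.1.2), (r.2.1, r.1.2)) :
          (Fin n × Fin n) × (Fin n × Fin n)) = r := by
        rw [e2]
      exact heq
    · intro t _
      rfl
    · intro r hr
      simp only [Finset.mem_filter, Finset.mem_product, Finset.mem_univ, true_and] at hr
      obtain ⟨⟨⟨⟨⟨⟨⟨h1, h2⟩, h3⟩, h4⟩, h5⟩, h6⟩, h7⟩, h8⟩ := hr
      have e2 : ((r.2.1 : Fin n), r.1.2) = r.2 := by rw [h7]
      have heq : (((r.1.1, r.1.2), (r.2.1, r.1.2)) :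
          (Fin n × Fin n) × (Fin n × Fin n)) = r := by
        rw [e2]
      exact (congrArg (fun s : (Fin n × Fin n) × (Fin n × Fin n) =>
        Lterm R F lam s.1 s.2 - Rterm R F lam s.2 s.1) heq).symm
  have hK4b : (∑ r ∈ (((((((univ.filter (fun q : Fin n × Fin n => q.1 < q.2)) ×ˢ
        (univ.filter (fun q : Fin n × Fin n => q.1 < q.2))).filter
        (fun r => ¬r.1 = r.2)).filter
        (fun r => ¬r.1.2 = r.2.1)).filter
        (fun r => ¬r.1.1 = r.2.2)).filter
        (fun r => ¬r.1.1 = r.2.1)).filter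
        (fun r => r.1.2 = r.2.2)).filter
        (fun r => ¬r.1.1 < r.2.1), (Lterm R F lam r.1 r.2 - Rterm R F lam r.2 r.1))
      = ∑ t ∈ univ.filter (fun t : Fin n × Fin n × Fin n => t.1 < t.2.1 ∧ t.2.1 < t.2.2), (Lterm R F lam (t.2.1, t.2.2) (t.1, t.2.2) - Rterm R F lam (t.1, t.2.2) (t.2.1, t.2.2)) := by
    refine Finset.sum_nbij' (fun r : (Fin n × Fin n) × (Fin n × Fin n) => (r.2.1, r.1.1, r.1.2))
      (fun t : Fin n × Fin n × Fin n => ((t.2.1, t.2.2), (t.1, t.2.2))) ?_ ?_ ?_ ?_ ?_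
    · intro r hr
      simp only [Finset.mem_filter, Finset.mem_product, Finset.mem_univ, true_and,
        Prod.ext_iff, Prod.mk.injEq, Fin.lt_def, Fin.ext_iff, not_and, and_true] at hr ⊢
      omega
    · intro t ht
      simp only [Finset.mem_filter, Finset.mem_product, Finset.mem_univ, true_and,
        Prod.ext_iff, Prod.mk.injEq, Fin.lt_def, Fin.ext_iff, not_and, and_true] at ht ⊢
      omega
    · intro r hr
      simp only [Finset.mem_filter, Finset.mem_product, Finset.mem_univ, true_and] at hr
      obtain ⟨⟨⟨⟨⟨⟨⟨h1, h2⟩, h3⟩, h4⟩, h5⟩, h6⟩, h7⟩, h8⟩ := hr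
      have e2 : ((r.2.1 : Fin n), r.1.2) = r.2 := by rw [h7]
      have heq : (((r.1.1, r.1.2), (r.2.1, r.1.2)) :
          (Fin n × Fin n) × (Fin n × Fin n)) = r := by
        rw [e2]
      exact heq
    · intro t _
      rfl
    · intro r hr
      simp only [Finset.mem_filter, Finset.mem_product, Finset.mem_univ, true_and] at hr
      obtain ⟨⟨⟨⟨⟨⟨⟨h1, h2⟩, h3⟩, h4⟩, h5⟩, h6⟩, h7⟩, h8⟩ := hr
      have e2 : ((r.2.1 : Fin n), r.1.2) = r.2 := by rw [h7]
      have heq : (((r.1.1, r.1.2), (r.2.1, r.1.2)) :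
          (Fin n × Fin n) × (Fin n × Fin n)) = r := by
        rw [e2]
      exact (congrArg (fun s : (Fin n × Fin n) × (Fin n × Fin n) =>
        Lterm R F lam s.1 s.2 - Rterm R F lam s.2 s.1) heq).symm
  have hKrest : (∑ r ∈ ((((((univ.filter (fun q : Fin n × Fin n => q.1 < q.2)) ×ˢ
        (univ.filter (fun q : Fin n × Fin n => q.1 < q.2))).filter
        (fun r => ¬r.1 = r.2)).filter
        (fun r => ¬r.1.2 = r.2.1)).filter
        (fun r => ¬r.1.1 = r.2.2)).filter
        (fun r => ¬r.1.1 = r.2.1)).filter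
        (fun r => ¬r.1.2 = r.2.2), (Lterm R F lam r.1 r.2 - Rterm R F lam r.2 r.1)) = 0 := by
    refine Finset.sum_eq_zero fun r hr => ?_
    simp only [Finset.mem_filter, Finset.mem_product, Finset.mem_univ, true_and] at hr
    obtain ⟨⟨⟨⟨⟨⟨h1, h2⟩, h3⟩, h4⟩, h5⟩, h6⟩, h7⟩ := hr
    exact sub_eq_zero_of_eq (disjoint_term (ne_of_lt h1) h6 h5 h4 h7 (ne_of_lt h2) lam F)
  rw [← Finset.sum_filter_add_sum_filter_not ((univ.filter (fun q : Fin n × Fin n => q.1 < q.2)) ×ˢ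
        (univ.filter (fun q : Fin n × Fin n => q.1 < q.2))) (fun r => r.1 = r.2)
      (fun r => (Lterm R F lam r.1 r.2 - Rterm R F lam r.2 r.1)),
    ← Finset.sum_filter_add_sum_filter_not (((univ.filter (fun q : Fin n × Fin n => q.1 < q.2)) ×ˢ
        (univ.filter (fun q : Fin n × Fin n => q.1 < q.2))).filter
        (fun r => ¬r.1 = r.2)) (fun r => r.1.2 = r.2.1)
      (fun r => (Lterm R F lam r.1 r.2 - Rterm R F lam r.2 r.1)),
    ← Finset.sum_filter_add_sum_filter_not ((((univ.filter (fun q : Fin n × Fin n => q.1 < q.2)) ×ˢ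
        (univ.filter (fun q : Fin n × Fin n => q.1 < q.2))).filter
        (fun r => ¬r.1 = r.2)).filter
        (fun r => ¬r.1.2 = r.2.1)) (fun r => r.1.1 = r.2.2)
      (fun r => (Lterm R F lam r.1 r.2 - Rterm R F lam r.2 r.1)),
    ← Finset.sum_filter_add_sum_filter_not (((((univ.filter (fun q : Fin n × Fin n => q.1 < q.2)) ×ˢ
        (univ.filter (fun q : Fin n × Fin n => q.1 < q.2))).filter
        (fun r => ¬r.1 = r.2)).filter
        (fun r => ¬r.1.2 = r.2.1)).filter
        (fun r => ¬r.1.1 = r.2.2)) (fun r => r.1.1 = r.2.1)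
      (fun r => (Lterm R F lam r.1 r.2 - Rterm R F lam r.2 r.1)),
    ← Finset.sum_filter_add_sum_filter_not ((((((univ.filter (fun q : Fin n × Fin n => q.1 < q.2)) ×ˢ
        (univ.filter (fun q : Fin n × Fin n => q.1 < q.2))).filter
        (fun r => ¬r.1 = r.2)).filter
        (fun r => ¬r.1.2 = r.2.1)).filter
        (fun r => ¬r.1.1 = r.2.2)).filter
        (fun r => r.1.1 = r.2.1)) (fun r => r.1.2 < r.2.2)
      (fun r => (Lterm R F lam r.1 r.2 - Rterm R F lam r.2 r.1)),
    ← Finset.sum_filter_add_sum_filter_not ((((((univ.filter (fun q : Fin n × Fin n => q.1 < q.2)) ×ˢ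
        (univ.filter (fun q : Fin n × Fin n => q.1 < q.2))).filter
        (fun r => ¬r.1 = r.2)).filter
        (fun r => ¬r.1.2 = r.2.1)).filter
        (fun r => ¬r.1.1 = r.2.2)).filter
        (fun r => ¬r.1.1 = r.2.1)) (fun r => r.1.2 = r.2.2)
      (fun r => (Lterm R F lam r.1 r.2 - Rterm R F lam r.2 r.1)),
    ← Finset.sum_filter_add_sum_filter_not (((((((univ.filter (fun q : Fin n × Fin n => q.1 < q.2)) ×ˢ
        (univ.filter (fun q : Fin n × Fin n => q.1 < q.2))).filter
        (fun r => ¬r.1 = r.2)).filter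
        (fun r => ¬r.1.2 = r.2.1)).filter
        (fun r => ¬r.1.1 = r.2.2)).filter
        (fun r => ¬r.1.1 = r.2.1)).filter
        (fun r => r.1.2 = r.2.2)) (fun r => r.1.1 < r.2.1)
      (fun r => (Lterm R F lam r.1 r.2 - Rterm R F lam r.2 r.1))]
  rw [hK0, hK1, hK2, hK3a, hK3b, hK4a, hK4b, hKrest]
  rw [zero_add, add_zero]
  rw [← Finset.sum_add_distrib, ← Finset.sum_add_distrib, ← Finset.sum_add_distrib,
    ← Finset.sum_add_distrib, ← Finset.sum_add_distrib]
  refine Finset.sum_eq_zero fun t ht => ?_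
  simp only [Finset.mem_filter, Finset.mem_univ, true_and] at ht
  have h := triple_term hRhol haybe hskew hnc (ne_of_lt ht.1) (ne_of_lt ht.2)
    (ne_of_lt (lt_trans ht.1 ht.2)) lam hD F
  linear_combination (norm := abel) h

end SZaux8b

/-- the additional Hamiltonian `𝓘^∨` commutes with the deformed spin
chain Hamiltonian `𝓗₂^∨` on holomorphic `U`-valued functions of `λ ∈ Λ` (the integrable
deformation of the Sechin–Zotov spin chain). -/
theorem Ivee_commutes_with_H2vee
    (n d : ℕ) (hn : 2 ≤ n) (hd : 1 ≤ d)
    (R : ℂ → ℂ → M2 d)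
    (hRhol : ∀ a b, DifferentiableOn ℂ (fun p : ℂ × ℂ => R p.1 p.2 a b) (Dtrig ×ˢ Dtrig))
    (hskew : SkewSym Dtrig R) (haybe : AYBE Dtrig R) (hunit : UnitarityTrig Dtrig R)
    (r : ℂ → M2 d) (hreg : RegularityId Dtrig R r)
    (Q Qinv : Matrix (Fin d) (Fin d) ℂ) (hQP : QuasiPeriodic Dtrig R Q Qinv)
    (Λ : Set (Fin n → ℂ)) (hΛopen : IsOpen Λ) (hΛne : Λ.Nonempty)
    (hΛperm : ∀ σ : Equiv.Perm (Fin n), ∀ lam ∈ Λ, (lam ∘ σ) ∈ Λ)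
    (hΛD : ∀ lam ∈ Λ, ∀ i j : Fin n, i ≠ j → lam i - lam j ∈ Dtrig)
    (F : (Fin n → ℂ) → Uspin n d) (hF : DifferentiableOn ℂ F Λ) :
    ∀ lam ∈ Λ, H2vee R (Ivee R F) lam = Ivee R (H2vee R F) lam := by
  intro lam hlam
  have hnc : (n : ℂ) ≠ 0 := Nat.cast_ne_zero.2 (by omega)
  have hD : ∀ i j : Fin n, i ≠ j → lam i - lam j ∈ Dtrig := hΛD lam hlam
  have hL : H2vee R (Ivee R F) lam
      = ∑ p ∈ univ.filter (fun q : Fin n × Fin n => q.1 < q.2),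
          ∑ q ∈ univ.filter (fun q : Fin n × Fin n => q.1 < q.2), Lterm R F lam p q := by
    simp only [H2vee, Ivee, svee, Lterm]
    refine Finset.sum_congr rfl fun p _ => ?_
    rw [mulVec_sum]
    refine Finset.sum_congr rfl fun q _ => ?_
    rw [Matrix.mulVec_smul, Matrix.mulVec_mulVec]
    rfl
  have hR : Ivee R (H2vee R F) lam
      = ∑ p ∈ univ.filter (fun q : Fin n × Fin n => q.1 < q.2),
          ∑ q ∈ univ.filter (fun q : Fin n × Fin n => q.1 < q.2), Rterm R F lam p q := by
    simp only [H2vee, Ivee, svee, Rterm]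
    refine Finset.sum_congr rfl fun p _ => ?_
    rw [mulVec_sum, Finset.smul_sum]
    refine Finset.sum_congr rfl fun q _ => ?_
    rw [Matrix.mulVec_mulVec]
    rfl
  rw [hL, hR]
  conv_rhs => rw [Finset.sum_comm]
  have hGzero : ∑ r ∈ (univ.filter (fun q : Fin n × Fin n => q.1 < q.2)) ×ˢ
      (univ.filter (fun q : Fin n × Fin n => q.1 < q.2)),
      (Lterm R F lam r.1 r.2 - Rterm R F lam r.2 r.1) = 0 :=
    Gzero hRhol haybe hskew hunit hn hnc lam hD F
  have hsub : ∑ r ∈ (univ.filter (fun q : Fin n × Fin n => q.1 < q.2)) ×ˢ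
      (univ.filter (fun q : Fin n × Fin n => q.1 < q.2)),
      (Lterm R F lam r.1 r.2 - Rterm R F lam r.2 r.1)
      = (∑ p ∈ univ.filter (fun q : Fin n × Fin n => q.1 < q.2),
          ∑ q ∈ univ.filter (fun q : Fin n × Fin n => q.1 < q.2), Lterm R F lam p q)
        - (∑ p ∈ univ.filter (fun q : Fin n × Fin n => q.1 < q.2),
          ∑ q ∈ univ.filter (fun q : Fin n × Fin n => q.1 < q.2), Rterm R F lam q p) := by
    rw [Finset.sum_product, ← Finset.sum_sub_distrib]
    refine Finset.sum_congr rfl fun p _ => ?_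
    rw [← Finset.sum_sub_distrib]
  rw [hsub] at hGzero
  exact sub_eq_zero.1 hGzero

end
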